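/- arXiv:1703.06480 — 8 statements merged into one kernel-verified Lean document; each statement's English description precedes it below -/
import Mathlib

section
/- Let A and B be disjoint nonempty analytic subsets of the Cantor space 2^ω, and suppose A is monotone. Then there exists a positive (hence Borel) set C ⊆ 2^ω such that A ⊆ C and C ∩ B = ∅. -/
open MeasureTheory Set Function PiNat

/-- The Cantor space `2^ω` of functions `ℕ → {0,1}`. -/
abbrev CantorSpace := ℕ → Bool

/-- `A ⊆ 2^ω` is *positive* if it belongs to the least family of subsets of `2^ω`
which contains the sets `U n = {x : x n = 1}` (`n ∈ ℕ`) and is closed under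
countable unions and countable intersections. -/
inductive IsPositive : Set CantorSpace → Prop
  | basic (n : ℕ) : IsPositive {x | x n = true}
  | iUnion (f : ℕ → Set CantorSpace) : (∀ n, IsPositive (f n)) → IsPositive (⋃ n, f n)
  | iInter (f : ℕ → Set CantorSpace) : (∀ n, IsPositive (f n)) → IsPositive (⋂ n, f n)

/-- `A ⊆ 2^ω` is *monotone* if `x ∈ A` and `x ⊆ y` (pointwise) imply `y ∈ A`. -/
def IsMonotoneSet (A : Set CantorSpace) : Prop :=
  ∀ x y : CantorSpace, x ∈ A → (∀ n, x n = true → y n = true) → y ∈ A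

lemma IsPositive.measurableSet {C : Set CantorSpace} (h : IsPositive C) :
    MeasurableSet C := by
  induction h with
  | basic n =>
    have : {x : CantorSpace | x n = true} = (fun x : CantorSpace => x n) ⁻¹' {true} := by
      ext x; simp
    rw [this]
    exact (measurable_pi_apply n) (measurableSet_singleton true)
  | iUnion f _ ih => exact MeasurableSet.iUnion ih
  | iInter f _ ih => exact MeasurableSet.iInter ih

/-- Two sets are positively separable if some positive set contains the first and is
disjoint from the second. -/
def PosSep (s t : Set CantorSpace) : Prop :=
  ∃ u, s ⊆ u ∧ Disjoint t u ∧ IsPositive u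

theorem PosSep.iUnion {s t : ℕ → Set CantorSpace}
    (h : ∀ m n, PosSep (s m) (t n)) : PosSep (⋃ n, s n) (⋃ m, t m) := by
  choose u hsu htu hu using h
  refine ⟨⋃ m, ⋂ n, u m n, ?_, ?_, ?_⟩
  · refine iUnion_subset fun m => subset_iUnion_of_subset m ?_
    exact subset_iInter fun n => hsu m n
  · simp_rw [disjoint_iUnion_left, disjoint_iUnion_right]
    intro n m
    apply Disjoint.mono_right _ (htu m n)
    apply iInter_subset
  · exact IsPositive.iUnion _ fun m => IsPositive.iInter _ fun n => hu m n

theorem posSep_range {f g : (ℕ → ℕ) → CantorSpace} (hf : Continuous f) (hg : Continuous g)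
    (h : ∀ α β, ∃ N, f α N = true ∧ g β N = false) : PosSep (range f) (range g) := by
  by_contra hfg
  have I : ∀ n x y, ¬PosSep (f '' cylinder x n) (g '' cylinder y n) →
      ∃ x' y', x' ∈ cylinder x n ∧ y' ∈ cylinder y n ∧
      ¬PosSep (f '' cylinder x' (n + 1)) (g '' cylinder y' (n + 1)) := by
    intro n x y
    contrapose!
    intro H
    rw [← iUnion_cylinder_update x n, ← iUnion_cylinder_update y n, image_iUnion, image_iUnion]
    refine PosSep.iUnion fun i j => ?_
    exact H _ _ (update_mem_cylinder _ _ _) (update_mem_cylinder _ _ _)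
  let A :=
    { p : ℕ × (ℕ → ℕ) × (ℕ → ℕ) //
      ¬PosSep (f '' cylinder p.2.1 p.1) (g '' cylinder p.2.2 p.1) }
  have : ∀ p : A, ∃ q : A,
      q.1.1 = p.1.1 + 1 ∧ q.1.2.1 ∈ cylinder p.1.2.1 p.1.1 ∧ q.1.2.2 ∈ cylinder p.1.2.2 p.1.1 := by
    rintro ⟨⟨n, x, y⟩, hp⟩
    rcases I n x y hp with ⟨x', y', hx', hy', h'⟩
    exact ⟨⟨⟨n + 1, x', y'⟩, h'⟩, rfl, hx', hy'⟩
  choose F hFn hFx hFy using this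
  let p0 : A := ⟨⟨0, fun _ => 0, fun _ => 0⟩, by simp [hfg]⟩
  let p : ℕ → A := fun n => F^[n] p0
  have prec : ∀ n, p (n + 1) = F (p n) := fun n => by
    simp only [p, iterate_succ', Function.comp]
  have pn_fst : ∀ n, (p n).1.1 = n := by
    intro n
    induction' n with n IH
    · rfl
    · simp only [prec, hFn, IH]
  have Ix : ∀ m n, m + 1 ≤ n → (p n).1.2.1 m = (p (m + 1)).1.2.1 m := by
    intro m
    apply Nat.le_induction
    · rfl
    intro n hmn IH
    have I : (F (p n)).val.snd.fst m = (p n).val.snd.fst m := by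
      apply hFx (p n) m
      rw [pn_fst]
      exact hmn
    rw [prec, I, IH]
  have Iy : ∀ m n, m + 1 ≤ n → (p n).1.2.2 m = (p (m + 1)).1.2.2 m := by
    intro m
    apply Nat.le_induction
    · rfl
    intro n hmn IH
    have I : (F (p n)).val.snd.snd m = (p n).val.snd.snd m := by
      apply hFy (p n) m
      rw [pn_fst]
      exact hmn
    rw [prec, I, IH]
  set x : ℕ → ℕ := fun n => (p (n + 1)).1.2.1 n with hx
  set y : ℕ → ℕ := fun n => (p (n + 1)).1.2.2 n with hy
  have M : ∀ n, ¬PosSep (f '' cylinder x n) (g '' cylinder y n) := by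
    intro n
    convert (p n).2 using 3
    · rw [pn_fst, ← mem_cylinder_iff_eq, mem_cylinder_iff]
      intro i hi
      rw [hx]
      exact (Ix i n hi).symm
    · rw [pn_fst, ← mem_cylinder_iff_eq, mem_cylinder_iff]
      intro i hi
      rw [hy]
      exact (Iy i n hi).symm
  obtain ⟨N, hxN, hyN⟩ := h x y
  have u_open : IsOpen {z : CantorSpace | z N = true} := by
    have e : {z : CantorSpace | z N = true} = (fun z : CantorSpace => z N) ⁻¹' {true} := rfl
    rw [e]; exact (isOpen_discrete _).preimage (continuous_apply N)
  have v_open : IsOpen {z : CantorSpace | z N = false} := by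
    have e : {z : CantorSpace | z N = false} = (fun z : CantorSpace => z N) ⁻¹' {false} := rfl
    rw [e]; exact (isOpen_discrete _).preimage (continuous_apply N)
  have huv : Disjoint {z : CantorSpace | z N = true} {z : CantorSpace | z N = false} := by
    rw [Set.disjoint_left]
    intro z hz hz'
    simp only [mem_setOf_eq] at hz hz'
    rw [hz] at hz'; exact Bool.noConfusion hz'
  letI : MetricSpace (ℕ → ℕ) := metricSpaceNatNat
  obtain ⟨εx, εxpos, hεx⟩ : ∃ (εx : ℝ), εx > 0 ∧
      Metric.ball x εx ⊆ f ⁻¹' {z : CantorSpace | z N = true} := by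
    apply Metric.mem_nhds_iff.1
    exact hf.continuousAt.preimage_mem_nhds (u_open.mem_nhds hxN)
  obtain ⟨εy, εypos, hεy⟩ : ∃ (εy : ℝ), εy > 0 ∧
      Metric.ball y εy ⊆ g ⁻¹' {z : CantorSpace | z N = false} := by
    apply Metric.mem_nhds_iff.1
    exact hg.continuousAt.preimage_mem_nhds (v_open.mem_nhds hyN)
  obtain ⟨n, hn⟩ : ∃ n : ℕ, (1 / 2 : ℝ) ^ n < min εx εy :=
    exists_pow_lt_of_lt_one (lt_min εxpos εypos) (by norm_num)
  have B : PosSep (f '' cylinder x n) (g '' cylinder y n) := by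
    refine ⟨{z : CantorSpace | z N = true}, ?_, ?_, IsPositive.basic N⟩
    · rw [image_subset_iff]
      apply Subset.trans _ hεx
      intro z hz
      rw [mem_cylinder_iff_dist_le] at hz
      exact hz.trans_lt (hn.trans_le (min_le_left _ _))
    · refine Disjoint.mono_left ?_ huv.symm
      change g '' cylinder y n ⊆ {z : CantorSpace | z N = false}
      rw [image_subset_iff]
      apply Subset.trans _ hεy
      intro z hz
      rw [mem_cylinder_iff_dist_le] at hz
      exact hz.trans_lt (hn.trans_le (min_le_right _ _))
  exact M n B

/-- **Dyck separation**: disjoint nonempty analytic `A, B ⊆ 2^ω` with `A` monotone can be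
separated by a positive (hence Borel) set. -/
theorem dyck_separation (A B : Set CantorSpace)
    (hA : AnalyticSet A) (hB : AnalyticSet B)
    (hAne : A.Nonempty) (hBne : B.Nonempty)
    (hdisj : A ∩ B = ∅) (hmono : IsMonotoneSet A) :
    ∃ C : Set CantorSpace, IsPositive C ∧ MeasurableSet C ∧ A ⊆ C ∧ C ∩ B = ∅ := by
  rw [AnalyticSet] at hA hB
  rcases hA with rfl | ⟨f, f_cont, rfl⟩
  · exact absurd hAne (by simp)
  rcases hB with hBe | ⟨g, g_cont, rfl⟩
  · exact absurd hBne (by simp [hBe])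
  have h : ∀ α β, ∃ N, f α N = true ∧ g β N = false := by
    intro α β
    by_contra hc
    push_neg at hc
    have hmem : g β ∈ range f := by
      apply hmono (f α) (g β) (mem_range_self α)
      intro n hn
      have := hc n hn
      simpa using this
    have : g β ∈ range f ∩ range g := ⟨hmem, mem_range_self β⟩
    rw [hdisj] at this
    exact this
  obtain ⟨C, hsub, hdisj', hpos⟩ := posSep_range f_cont g_cont h
  refine ⟨C, hpos, hpos.measurableSet, hsub, ?_⟩
  rw [Set.inter_comm]
  exact Set.disjoint_iff_inter_eq_empty.1 hdisj'
end

section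
/- A Borel subset A of the Cantor space 2^ω with A ≠ ∅ and A ≠ 2^ω is monotone if and only if it is positive. -/
/-- positive or trivial -/
def PosT (P : Set CantorSpace) : Prop := IsPositive P ∨ P = ∅ ∨ P = Set.univ

lemma PosT.iUnion (P : ℕ → Set CantorSpace) (h : ∀ i, PosT (P i)) : PosT (⋃ i, P i) := by
  classical
  by_cases hu : ∃ i, P i = Set.univ
  · right; right
    obtain ⟨i, hi⟩ := hu
    exact Set.eq_univ_of_univ_subset (hi ▸ Set.subset_iUnion P i)
  by_cases hp : ∃ i, IsPositive (P i)
  · obtain ⟨i₀, hi₀⟩ := hp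
    left
    set Q : ℕ → Set CantorSpace := fun i => if IsPositive (P i) then P i else P i₀ with hQ
    have hQP : ∀ i, IsPositive (Q i) := by
      intro i; by_cases h' : IsPositive (P i) <;> simp [hQ, h', hi₀]
    have : (⋃ i, P i) = ⋃ i, Q i := by
      apply Set.Subset.antisymm
      · apply Set.iUnion_subset; intro i
        by_cases h' : IsPositive (P i)
        · exact le_trans (le_of_eq (by simp [hQ, h'])) (Set.subset_iUnion Q i)
        · rcases h i with h'' | h'' | h''
          · exact absurd h'' h'
          · simp [h'']
          · exact absurd h'' (by intro hc; exact hu ⟨i, hc⟩)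
      · apply Set.iUnion_subset; intro i
        by_cases h' : IsPositive (P i)
        · exact le_trans (le_of_eq (by simp [hQ, h'])) (Set.subset_iUnion P i)
        · exact le_trans (le_of_eq (by simp [hQ, h'])) (Set.subset_iUnion P i₀)
    rw [this]
    exact IsPositive.iUnion Q hQP
  · right; left
    apply Set.eq_empty_iff_forall_notMem.2
    intro x hx
    obtain ⟨i, hi⟩ := Set.mem_iUnion.1 hx
    rcases h i with h' | h' | h'
    · exact hp ⟨i, h'⟩
    · rw [h'] at hi; exact hi
    · exact hu ⟨i, h'⟩

lemma PosT.iInter (P : ℕ → Set CantorSpace) (h : ∀ i, PosT (P i)) : PosT (⋂ i, P i) := by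
  classical
  by_cases hu : ∃ i, P i = ∅
  · right; left
    obtain ⟨i, hi⟩ := hu
    exact Set.subset_empty_iff.1 (hi ▸ Set.iInter_subset P i)
  by_cases hp : ∃ i, IsPositive (P i)
  · obtain ⟨i₀, hi₀⟩ := hp
    left
    set Q : ℕ → Set CantorSpace := fun i => if IsPositive (P i) then P i else P i₀ with hQ
    have hQP : ∀ i, IsPositive (Q i) := by
      intro i; by_cases h' : IsPositive (P i) <;> simp [hQ, h', hi₀]
    have : (⋂ i, P i) = ⋂ i, Q i := by
      apply Set.Subset.antisymm
      · apply Set.subset_iInter; intro i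
        by_cases h' : IsPositive (P i)
        · exact le_trans (Set.iInter_subset P i) (le_of_eq (by simp [hQ, h']))
        · exact le_trans (Set.iInter_subset P i₀) (le_of_eq (by simp [hQ, h']))
      · apply Set.subset_iInter; intro i
        by_cases h' : IsPositive (P i)
        · exact le_trans (Set.iInter_subset Q i) (le_of_eq (by simp [hQ, h']))
        · rcases h i with h'' | h'' | h''
          · exact absurd h'' h'
          · exact absurd h'' (by intro hc; exact hu ⟨i, hc⟩)
          · simp [h'']
    rw [this]
    exact IsPositive.iInter Q hQP
  · right; right
    apply Set.eq_univ_of_forall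
    intro x
    apply Set.mem_iInter.2
    intro i
    rcases h i with h' | h' | h'
    · exact absurd h' (by intro hc; exact hp ⟨i, hc⟩)
    · exact absurd h' (by intro hc; exact hu ⟨i, hc⟩)
    · rw [h']; trivial

/-- `S` and `T` can be separated by a positive-or-trivial set. -/
def PSep (S T : Set CantorSpace) : Prop := ∃ P, PosT P ∧ S ⊆ P ∧ P ∩ T = ∅

lemma sep_iUnion {S T : ℕ → Set CantorSpace} (h : ∀ i j, PSep (S i) (T j)) :
    PSep (⋃ i, S i) (⋃ j, T j) := by
  classical
  choose P hP hSP hPT using h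
  refine ⟨⋃ i, ⋂ j, P i j, ?_, ?_, ?_⟩
  · exact PosT.iUnion _ (fun i => PosT.iInter _ (fun j => hP i j))
  · exact Set.iUnion_mono (fun i => Set.subset_iInter (fun j => hSP i j))
  · apply Set.eq_empty_iff_forall_notMem.2
    rintro x ⟨hx1, hx2⟩
    obtain ⟨i, hi⟩ := Set.mem_iUnion.1 hx1
    obtain ⟨j, hj⟩ := Set.mem_iUnion.1 hx2
    have : x ∈ P i j ∩ T j := ⟨Set.mem_iInter.1 hi j, hj⟩
    rw [hPT i j] at this
    exact this

def cylL (s : List ℕ) : Set (ℕ → ℕ) := {u | ∀ i, i < s.length → u i = s.getD i 0}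

lemma cylL_nil : cylL [] = Set.univ := by
  ext u; simp [cylL]

lemma cylL_succ (s : List ℕ) : cylL s = ⋃ a : ℕ, cylL (s ++ [a]) := by
  ext u
  simp only [Set.mem_iUnion]
  constructor
  · intro h
    refine ⟨u s.length, ?_⟩
    intro i hi
    rcases Nat.lt_or_ge i s.length with h' | h'
    · rw [List.getD_append _ _ _ _ h']
      exact h i h'
    · have : i = s.length := by
        have : i < s.length + 1 := by simpa using hi
        omega
      subst this
      rw [List.getD_append_right _ _ _ _ h']
      simp
  · rintro ⟨a, ha⟩
    intro i hi
    have := ha i (by simp; omega)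
    rwa [List.getD_append _ _ _ _ hi] at this

lemma psep_step {f g : (ℕ → ℕ) → CantorSpace} {s t : List ℕ}
    (h : ¬ PSep (f '' cylL s) (g '' cylL t)) :
    ∃ a b, ¬ PSep (f '' cylL (s ++ [a])) (g '' cylL (t ++ [b])) := by
  by_contra hc
  push_neg at hc
  apply h
  have h1 : f '' cylL s = ⋃ a, f '' cylL (s ++ [a]) := by
    rw [cylL_succ s, Set.image_iUnion]
  have h2 : g '' cylL t = ⋃ b, g '' cylL (t ++ [b]) := by
    rw [cylL_succ t, Set.image_iUnion]
  rw [h1, h2]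
  exact sep_iUnion hc

open Classical in
noncomputable def seqAux (f g : (ℕ → ℕ) → CantorSpace) : ℕ → List ℕ × List ℕ
  | 0 => ([], [])
  | k+1 =>
    if h : ¬ PSep (f '' cylL (seqAux f g k).1) (g '' cylL (seqAux f g k).2) then
      ((seqAux f g k).1 ++ [(psep_step h).choose],
       (seqAux f g k).2 ++ [(psep_step h).choose_spec.choose])
    else seqAux f g k

section Main

variable {f g : (ℕ → ℕ) → CantorSpace}

lemma seq_ns (h0 : ¬ PSep (f '' cylL (seqAux f g 0).1) (g '' cylL (seqAux f g 0).2)) :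
    ∀ k, ¬ PSep (f '' cylL (seqAux f g k).1) (g '' cylL (seqAux f g k).2) := by
  intro k
  induction k with
  | zero => exact h0
  | succ k ih =>
    rw [seqAux, dif_pos ih]
    exact (psep_step ih).choose_spec.choose_spec

lemma seq_succ (h0 : ¬ PSep (f '' cylL (seqAux f g 0).1) (g '' cylL (seqAux f g 0).2)) (k : ℕ) :
    ∃ a b, (seqAux f g (k+1)).1 = (seqAux f g k).1 ++ [a]
      ∧ (seqAux f g (k+1)).2 = (seqAux f g k).2 ++ [b] := by
  have h := seq_ns h0 k
  refine ⟨(psep_step h).choose, (psep_step h).choose_spec.choose, ?_, ?_⟩ <;>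
    rw [seqAux, dif_pos h]

lemma seq_len (h0 : ¬ PSep (f '' cylL (seqAux f g 0).1) (g '' cylL (seqAux f g 0).2)) :
    ∀ k, (seqAux f g k).1.length = k ∧ (seqAux f g k).2.length = k := by
  intro k
  induction k with
  | zero => rw [seqAux]; exact ⟨rfl, rfl⟩
  | succ k ih =>
    obtain ⟨a, b, ha, hb⟩ := seq_succ h0 k
    rw [ha, hb]
    simp [ih.1, ih.2]

lemma seq_getD (h0 : ¬ PSep (f '' cylL (seqAux f g 0).1) (g '' cylL (seqAux f g 0).2)) :
    ∀ k, ∀ i, i < k →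
      (seqAux f g k).1.getD i 0 = (seqAux f g (i+1)).1.getD i 0
      ∧ (seqAux f g k).2.getD i 0 = (seqAux f g (i+1)).2.getD i 0 := by
  intro k
  induction k with
  | zero => intro i hi; omega
  | succ k ih =>
    intro i hi
    rcases Nat.lt_or_ge i k with h' | h'
    · obtain ⟨a, b, ha, hb⟩ := seq_succ h0 k
      rw [ha, hb,
        List.getD_append _ _ _ _ (by rw [(seq_len h0 k).1]; exact h'),
        List.getD_append _ _ _ _ (by rw [(seq_len h0 k).2]; exact h')]
      exact ih i h'
    · have : i = k := by omega
      subst this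
      exact ⟨rfl, rfl⟩

lemma cyl_subset_of_isOpen {O : Set (ℕ → ℕ)} (hO : IsOpen O) {w : ℕ → ℕ} (hw : w ∈ O) :
    ∃ k, {u : ℕ → ℕ | ∀ i, i < k → u i = w i} ⊆ O := by
  obtain ⟨I, u, h1, h2⟩ := isOpen_pi_iff.1 hO w hw
  refine ⟨(I.sup id) + 1, ?_⟩
  intro x hx
  apply h2
  intro i hi
  have hlt : i < I.sup id + 1 := Nat.lt_succ_of_le (Finset.le_sup (f := id) hi)
  rw [hx i hlt]
  exact (h1 i hi).2

lemma psep_main (hf : Continuous f) (hg : Continuous g)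
    (hd : ∀ u v, ∃ n, f u n = true ∧ g v n = false) :
    PSep (Set.range f) (Set.range g) := by
  classical
  by_contra h0'
  have h0 : ¬ PSep (f '' cylL (seqAux f g 0).1) (g '' cylL (seqAux f g 0).2) := by
    rw [seqAux]
    simpa [cylL_nil, Set.image_univ] using h0'
  set w : ℕ → ℕ := fun i => (seqAux f g (i+1)).1.getD i 0 with hw
  set v : ℕ → ℕ := fun i => (seqAux f g (i+1)).2.getD i 0 with hv
  have cyl_eq1 : ∀ k, cylL ((seqAux f g k).1) = {u : ℕ → ℕ | ∀ i, i < k → u i = w i} := by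
    intro k
    ext u
    simp only [cylL, Set.mem_setOf_eq, (seq_len h0 k).1]
    constructor
    · intro h i hi
      rw [h i hi]
      exact (seq_getD h0 k i hi).1
    · intro h i hi
      rw [h i hi]
      exact ((seq_getD h0 k i hi).1).symm
  have cyl_eq2 : ∀ k, cylL ((seqAux f g k).2) = {u : ℕ → ℕ | ∀ i, i < k → u i = v i} := by
    intro k
    ext u
    simp only [cylL, Set.mem_setOf_eq, (seq_len h0 k).2]
    constructor
    · intro h i hi
      rw [h i hi]
      exact (seq_getD h0 k i hi).2
    · intro h i hi
      rw [h i hi]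
      exact ((seq_getD h0 k i hi).2).symm
  obtain ⟨n, hx, hz⟩ := hd w v
  have hO1 : IsOpen {u : ℕ → ℕ | f u n = true} := by
    have : {u : ℕ → ℕ | f u n = true} = (fun u => f u n) ⁻¹' {true} := rfl
    rw [this]
    exact ((continuous_apply n).comp hf).isOpen_preimage _ (isOpen_discrete _)
  have hO2 : IsOpen {u : ℕ → ℕ | g u n = false} := by
    have : {u : ℕ → ℕ | g u n = false} = (fun u => g u n) ⁻¹' {false} := rfl
    rw [this]
    exact ((continuous_apply n).comp hg).isOpen_preimage _ (isOpen_discrete _)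
  obtain ⟨k1, hk1⟩ := cyl_subset_of_isOpen hO1 hx
  obtain ⟨k2, hk2⟩ := cyl_subset_of_isOpen hO2 hz
  set K := max k1 k2 with hK
  apply seq_ns h0 K
  refine ⟨{x | x n = true}, Or.inl (IsPositive.basic n), ?_, ?_⟩
  · rintro y ⟨u, hu, rfl⟩
    rw [cyl_eq1 K] at hu
    exact hk1 (fun i hi => hu i (lt_of_lt_of_le hi (le_max_left _ _)))
  · apply Set.eq_empty_iff_forall_notMem.2
    rintro y ⟨hy1, u, hu, rfl⟩
    rw [cyl_eq2 K] at hu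
    have : g u n = false := hk2 (fun i hi => hu i (lt_of_lt_of_le hi (le_max_right _ _)))
    rw [Set.mem_setOf_eq, this] at hy1
    exact Bool.false_ne_true hy1

end Main

lemma IsPositive.monotoneSet {A : Set CantorSpace} (h : IsPositive A) : IsMonotoneSet A := by
  induction h with
  | basic n =>
    intro x y hx hxy
    exact hxy n hx
  | iUnion f hf ih =>
    intro x y hx hxy
    obtain ⟨i, hi⟩ := Set.mem_iUnion.1 hx
    exact Set.mem_iUnion.2 ⟨i, ih i x y hi hxy⟩
  | iInter f hf ih =>
    intro x y hx hxy
    exact Set.mem_iInter.2 fun i => ih i x y (Set.mem_iInter.1 hx i) hxy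

/-- A Borel subset of `2^ω` different from `∅` and `2^ω` is monotone exactly when
it is positive. -/
theorem borel_monotone_iff_positive (A : Set CantorSpace)
    (hBorel : MeasurableSet A) (hne : A ≠ ∅) (hnuniv : A ≠ Set.univ) :
    IsMonotoneSet A ↔ IsPositive A := by
  constructor
  · intro hmono
    have hAc : Aᶜ ≠ ∅ := by
      intro h
      exact hnuniv (Set.compl_empty_iff.1 h)
    haveI : PolishSpace CantorSpace := instPolishSpaceOfSeparableSpaceOfIsCompletelyMetrizableSpace
    have hA_an : MeasureTheory.AnalyticSet A := hBorel.analyticSet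
    have hAc_an : MeasureTheory.AnalyticSet Aᶜ := hBorel.compl.analyticSet
    rw [MeasureTheory.AnalyticSet] at hA_an hAc_an
    rcases hA_an with h | ⟨f, hf, hfr⟩
    · exact absurd h hne
    rcases hAc_an with h | ⟨g, hg, hgr⟩
    · exact absurd h hAc
    have hd : ∀ u v, ∃ n, f u n = true ∧ g v n = false := by
      intro u v
      have hu : f u ∈ A := hfr ▸ Set.mem_range_self u
      have hv : g v ∈ Aᶜ := hgr ▸ Set.mem_range_self v
      by_contra hc
      push_neg at hc
      exact hv (hmono (f u) (g v) hu (fun n hn => Bool.ne_false_iff.1 (hc n hn)))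
    obtain ⟨P, hP, hSP, hPT⟩ := psep_main hf hg hd
    rw [hfr] at hSP
    rw [hgr] at hPT
    have hPA : P = A := by
      apply Set.Subset.antisymm _ hSP
      intro x hx
      by_contra hxA
      exact Set.eq_empty_iff_forall_notMem.1 hPT x ⟨hx, hxA⟩
    rcases hP with h | h | h
    · rwa [hPA] at h
    · exact absurd (hPA ▸ h) hne
    · exact absurd (hPA ▸ h) hnuniv
  · exact fun h => h.monotoneSet
end

section
/- There exists a monotone analytic subset A of the Cantor space 2^ω which is Σ¹₁-complete: for every zero-dimensional Polish space Z and every analytic set P ⊆ Z there is a continuous function f : Z → 2^ω with P = f⁻¹[A]. -/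
open MeasureTheory

/-- A topological space is *zero-dimensional* if it has a basis of clopen sets. -/
def ZeroDimensional (Z : Type*) [TopologicalSpace Z] : Prop :=
  ∃ b : Set (Set Z), (∀ s ∈ b, IsClopen s) ∧ TopologicalSpace.IsTopologicalBasis b

open Set

noncomputable section Aux

/-- Code of the initial segment of length `n` of `b`. -/
def seqCode (n : ℕ) (b : ℕ → ℕ) : ℕ :=
  Encodable.encode (List.ofFn fun i : Fin n => b i)

/-- The monotone complete analytic set: `x` contains (the codes of) all initial
segments of some infinite branch. -/
def BranchSet : Set CantorSpace :=
  {x | ∃ b : ℕ → ℕ, ∀ n : ℕ, x (seqCode n b) = true}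

theorem continuous_seqCode (n : ℕ) : Continuous fun b : ℕ → ℕ => seqCode n b := by
  have : (fun b : ℕ → ℕ => seqCode n b)
      = (fun v : Fin n → ℕ => Encodable.encode (List.ofFn v)) ∘ (fun b (i : Fin n) => b i) := rfl
  rw [this]
  exact continuous_of_discreteTopology.comp (continuous_pi fun i => continuous_apply (i : ℕ))

theorem continuous_eval_nat {X : Type*} [TopologicalSpace X] {F : X → ℕ → Bool} {c : X → ℕ}
    (hF : Continuous F) (hc : Continuous c) : Continuous fun x => F x (c x) := by
  rw [continuous_def]
  intro S hS
  have : (fun x => F x (c x)) ⁻¹' S = ⋃ k : ℕ, c ⁻¹' {k} ∩ (fun x => F x k) ⁻¹' S := by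
    ext x
    simp only [mem_preimage, mem_iUnion, mem_inter_iff, mem_singleton_iff]
    constructor
    · intro h; exact ⟨c x, rfl, h⟩
    · rintro ⟨k, hk, h⟩; rwa [hk]
  rw [this]
  exact isOpen_iUnion fun k =>
    ((isOpen_discrete _).preimage hc).inter (hS.preimage ((continuous_apply k).comp hF))

theorem monotone_BranchSet : IsMonotoneSet BranchSet := by
  rintro x y ⟨b, hb⟩ hxy
  exact ⟨b, fun n => hxy _ (hb n)⟩

theorem analytic_BranchSet : AnalyticSet BranchSet := by
  set C : Set (CantorSpace × (ℕ → ℕ)) := {p | ∀ n, p.1 (seqCode n p.2) = true} with hCdef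
  have hC : IsClosed C := by
    have : C = ⋂ n, (fun p : CantorSpace × (ℕ → ℕ) => p.1 (seqCode n p.2)) ⁻¹' {true} := by
      ext p; simp [hCdef]
    rw [this]
    refine isClosed_iInter fun n => (isClosed_discrete _).preimage ?_
    exact continuous_eval_nat continuous_fst ((continuous_seqCode n).comp continuous_snd)
  have himg : BranchSet = Prod.fst '' C := by
    ext x
    constructor
    · rintro ⟨b, hb⟩; exact ⟨(x, b), hb, rfl⟩
    · rintro ⟨⟨x', b⟩, hb, rfl⟩; exact ⟨b, hb⟩
  rw [himg]
  haveI : PolishSpace Bool := inferInstance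
  exact hC.analyticSet.image_of_continuous continuous_fst

variable {Z : Type} [MetricSpace Z]

/-- The clopen set of `z`'s compatible with all the second coordinates of `l`. -/
def branchClop (V : ℕ → Set Z) (l : List ℕ) : Set Z :=
  ⋂ j ∈ Finset.range l.length, V ((l.getD j 0).unpair.2)

/-- The static condition on a finite sequence `l`. -/
def GoodL (V : ℕ → Set Z) (g : (ℕ → ℕ) → Z) (l : List ℕ) : Prop :=
  ∀ j, j < l.length →
    (V ((l.getD j 0).unpair.2) ∩
      g '' {c : ℕ → ℕ | ∀ m, m ≤ j → c m = (l.getD m 0).unpair.1}).Nonempty ∧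
    ∀ w ∈ V ((l.getD j 0).unpair.2), ∀ w' ∈ V ((l.getD j 0).unpair.2),
      dist w w' ≤ 1 / ((j : ℝ) + 1)

open Classical in
/-- The clopen set whose indicator gives coordinate `k` of the reduction. -/
def WSet (V : ℕ → Set Z) (g : (ℕ → ℕ) → Z) (k : ℕ) : Set Z :=
  match Encodable.decode (α := List ℕ) k with
  | none => ∅
  | some l => if GoodL V g l then branchClop V l else ∅

open Classical in
theorem WSet_encode (V : ℕ → Set Z) (g : (ℕ → ℕ) → Z) (l : List ℕ) :
    WSet V g (Encodable.encode l) =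
      if GoodL V g l then branchClop V l else ∅ := by
  simp [WSet, Encodable.encodek]

theorem isClopen_WSet (V : ℕ → Set Z) (g : (ℕ → ℕ) → Z) (hV : ∀ k, IsClopen (V k)) (k : ℕ) :
    IsClopen (WSet V g k) := by
  rcases h : Encodable.decode (α := List ℕ) k with - | l
  · simp only [WSet, h]; exact isClopen_empty
  · simp only [WSet, h]
    split_ifs
    · exact isClopen_biInter_finset fun j _ => hV _
    · exact isClopen_empty

theorem getD_ofFn (n : ℕ) (B : ℕ → ℕ) (j : ℕ) (hj : j < n) :
    (List.ofFn (fun t : Fin n => B t)).getD j 0 = B j := by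
  rw [List.getD_eq_getElem _ _ (by simpa using hj)]
  simp

theorem half_sum (j : ℕ) :
    1 / (2 * ((j : ℝ) + 1)) + 1 / (2 * ((j : ℝ) + 1)) = 1 / ((j : ℝ) + 1) := by
  have h : (j : ℝ) + 1 ≠ 0 := by positivity
  rw [← add_div, one_add_one_eq_two, mul_comm, div_eq_div_iff (by positivity) h]
  ring

end Aux

/-- There is a monotone analytic subset of `2^ω` which is `Σ¹₁`-complete: every analytic
subset of a zero-dimensional Polish space is reduced to it by a continuous function. -/
theorem exists_monotone_analytic_complete :
    ∃ A : Set CantorSpace, IsMonotoneSet A ∧ AnalyticSet A ∧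
      ∀ (Z : Type) (_ : TopologicalSpace Z) (_ : PolishSpace Z), ZeroDimensional Z →
        ∀ P : Set Z, AnalyticSet P →
          ∃ f : Z → CantorSpace, Continuous f ∧ P = f ⁻¹' A := by
  classical
  refine ⟨BranchSet, monotone_BranchSet, analytic_BranchSet, ?_⟩
  intro Z _tZ _pZ hzd P hP
  by_cases hE : IsEmpty Z
  · exact ⟨fun _ _ => false, continuous_const, by ext z; exact (hE.false z).elim⟩
  haveI : Nonempty Z := not_isEmpty_iff.mp hE
  rw [AnalyticSet] at hP
  rcases hP with rfl | ⟨g, hg, hgr⟩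
  · refine ⟨fun _ _ => false, continuous_const, ?_⟩
    ext z
    simp only [mem_empty_iff_false, mem_preimage, false_iff]
    rintro ⟨b, hb⟩
    simpa using hb 0
  · letI := TopologicalSpace.upgradeIsCompletelyMetrizable Z
    obtain ⟨bb, hbbclopen, hbbbasis⟩ := hzd
    obtain ⟨cb, cbc, -, cbb⟩ := TopologicalSpace.exists_countable_basis Z
    obtain ⟨Bs, hBs⟩ := (cbc.insert ∅).exists_eq_range ⟨∅, mem_insert _ _⟩
    set V : ℕ → Set Z := fun k =>
      if h : ∃ u ∈ bb, Bs k.unpair.1 ⊆ u ∧ u ⊆ Bs k.unpair.2 then h.choose else ∅ with hVdef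
    have hVclopen : ∀ k, IsClopen (V k) := by
      intro k; rw [hVdef]; dsimp only; split_ifs with h
      · exact hbbclopen _ h.choose_spec.1
      · exact isClopen_empty
    have hVkey : ∀ (z : Z) (ε : ℝ), 0 < ε → ∃ k, z ∈ V k ∧ V k ⊆ Metric.ball z ε := by
      intro z ε hε
      obtain ⟨t, htcb, hzt, htball⟩ :=
        cbb.exists_subset_of_mem_open (Metric.mem_ball_self hε) Metric.isOpen_ball
      obtain ⟨u, hubb, hzu, hut⟩ := hbbbasis.exists_subset_of_mem_open hzt (cbb.isOpen htcb)
      obtain ⟨s, hscb, hzs, hsu⟩ := cbb.exists_subset_of_mem_open hzu (hbbclopen u hubb).2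
      have hs' : s ∈ range Bs := by rw [← hBs]; exact mem_insert_of_mem _ hscb
      have ht' : t ∈ range Bs := by rw [← hBs]; exact mem_insert_of_mem _ htcb
      obtain ⟨n, hn⟩ := hs'
      obtain ⟨m, hm⟩ := ht'
      have e1 : (Nat.pair n m).unpair.1 = n := by simp
      have e2 : (Nat.pair n m).unpair.2 = m := by simp
      have hcond : ∃ u' ∈ bb, Bs (Nat.pair n m).unpair.1 ⊆ u' ∧ u' ⊆ Bs (Nat.pair n m).unpair.2 := by
        refine ⟨u, hubb, ?_, ?_⟩
        · rw [e1, hn]; exact hsu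
        · rw [e2, hm]; exact hut
      refine ⟨Nat.pair n m, ?_, ?_⟩
      · rw [hVdef]; dsimp only; rw [dif_pos hcond]
        apply hcond.choose_spec.2.1
        rw [e1, hn]; exact hzs
      · rw [hVdef]; dsimp only; rw [dif_pos hcond]
        intro w hw
        apply htball
        have := hcond.choose_spec.2.2 hw
        rwa [e2, hm] at this
    set f : Z → CantorSpace := fun z k => (WSet V g k).boolIndicator z with hfdef
    refine ⟨f, ?_, ?_⟩
    · apply continuous_pi
      intro k
      exact (continuous_boolIndicator_iff_isClopen _).2 (isClopen_WSet V g hVclopen k)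
    · ext z
      rw [← hgr]
      simp only [mem_preimage]
      constructor
      · rintro ⟨b, rfl⟩
        have hsel : ∀ j : ℕ, ∃ k,
            g b ∈ V k ∧ V k ⊆ Metric.ball (g b) (1 / (2 * ((j : ℝ) + 1))) := by
          intro j; exact hVkey _ _ (by positivity)
        choose ii hii1 hii2 using hsel
        refine ⟨fun j => Nat.pair (b j) (ii j), ?_⟩
        intro n
        set l : List ℕ := List.ofFn (fun t : Fin n => Nat.pair (b t) (ii t)) with hl
        have hlen : l.length = n := by simp [hl]
        have hget : ∀ j, j < n → l.getD j 0 = Nat.pair (b j) (ii j) := fun j hj =>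
          getD_ofFn n (fun m => Nat.pair (b m) (ii m)) j hj
        have hGood : GoodL V g l := by
          intro j hj
          rw [hlen] at hj
          have e2 : (l.getD j 0).unpair.2 = ii j := by rw [hget j hj]; simp
          constructor
          · rw [e2]
            refine ⟨g b, hii1 j, b, ?_, rfl⟩
            intro m hm
            have hm' : m < n := lt_of_le_of_lt hm hj
            rw [hget m hm']
            simp
          · intro w hw w' hw'
            rw [e2] at hw hw'
            have h1 := hii2 j hw
            have h2 := hii2 j hw'
            rw [Metric.mem_ball] at h1 h2
            calc dist w w' ≤ dist w (g b) + dist (g b) w' := dist_triangle _ _ _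
              _ ≤ 1 / (2 * ((j : ℝ) + 1)) + 1 / (2 * ((j : ℝ) + 1)) := by
                  refine add_le_add h1.le ?_
                  rw [dist_comm]
                  exact h2.le
              _ = 1 / ((j : ℝ) + 1) := half_sum j
        have hmem : g b ∈ branchClop V l := by
          rw [branchClop]
          refine Set.mem_iInter₂.2 fun j hj => ?_
          rw [Finset.mem_range, hlen] at hj
          have e2 : (l.getD j 0).unpair.2 = ii j := by rw [hget j hj]; simp
          rw [e2]
          exact hii1 j
        show (WSet V g (seqCode n fun j => Nat.pair (b j) (ii j))).boolIndicator (g b) = true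
        rw [show (seqCode n fun j => Nat.pair (b j) (ii j)) = Encodable.encode l from rfl,
          WSet_encode, if_pos hGood]
        exact (Set.mem_iff_boolIndicator _ _).1 hmem
      · rintro ⟨B, hB⟩
        set b : ℕ → ℕ := fun m => (B m).unpair.1 with hbdef
        have hcs : ∀ j : ℕ, ∃ c : ℕ → ℕ,
            (∀ m, m ≤ j → c m = b m) ∧ dist z (g c) ≤ 1 / ((j : ℝ) + 1) := by
          intro j
          have hB' := hB (j + 1)
          set l : List ℕ := List.ofFn (fun t : Fin (j + 1) => B t) with hl
          have hz' : z ∈ WSet V g (Encodable.encode l) := by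
            have : (WSet V g (Encodable.encode l)).boolIndicator z = true := hB'
            exact (Set.mem_iff_boolIndicator _ _).2 this
          rw [WSet_encode] at hz'
          split_ifs at hz' with hG
          · have hlen : l.length = j + 1 := by simp [hl]
            have hget : ∀ m, m < j + 1 → l.getD m 0 = B m := fun m hm => getD_ofFn _ _ m hm
            obtain ⟨y, hyV, c, hc, rfl⟩ := (hG j (by rw [hlen]; omega)).1
            have hzV : z ∈ V ((l.getD j 0).unpair.2) := by
              rw [branchClop] at hz'
              exact Set.mem_iInter₂.1 hz' j (by rw [Finset.mem_range, hlen]; omega)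
            refine ⟨c, ?_, ?_⟩
            · intro m hm
              have := hc m hm
              rw [hget m (by omega)] at this
              exact this
            · exact (hG j (by rw [hlen]; omega)).2 z hzV (g c) hyV
          · exact absurd hz' (notMem_empty z)
        choose c hc1 hc2 using hcs
        have hctend : Filter.Tendsto c Filter.atTop (nhds b) := by
          rw [tendsto_pi_nhds]
          intro m
          have hev : ∀ᶠ j in Filter.atTop, b m = c j m :=
            Filter.eventually_atTop.2 ⟨m, fun j hj => (hc1 j m hj).symm⟩
          exact Filter.Tendsto.congr' hev tendsto_const_nhds
        have h1 : Filter.Tendsto (fun j => g (c j)) Filter.atTop (nhds (g b)) :=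
          (hg.tendsto b).comp hctend
        have h2 : Filter.Tendsto (fun j => g (c j)) Filter.atTop (nhds z) := by
          rw [tendsto_iff_dist_tendsto_zero]
          refine squeeze_zero (fun j => dist_nonneg) (fun j => ?_)
            tendsto_one_div_add_atTop_nhds_zero_nat
          rw [dist_comm]
          exact hc2 j
        exact ⟨b, tendsto_nhds_unique h1 h2⟩
end

section
/- There exists a subset A of the Cantor space 2^ω which is monotone and analytic but not Borel. -/
open MeasureTheory

namespace MonotoneAux

open Set TopologicalSpace

instance : PolishSpace CantorSpace := PolishSpace.mk

abbrev W : Type := CantorSpace × (ℕ → ℕ)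

lemma exists_basis_enum : ∃ e : ℕ → Set W, (∀ n, IsOpen (e n)) ∧
    ∀ O : Set W, IsOpen O → ∀ q ∈ O, ∃ n, q ∈ e n ∧ e n ⊆ O := by
  obtain ⟨b, hbc, -, hb⟩ := exists_countable_basis W
  have hne : b.Nonempty := by
    obtain ⟨v, hv, -, -⟩ := hb.exists_subset_of_mem_open (mem_univ (default : W)) isOpen_univ
    exact ⟨v, hv⟩
  obtain ⟨e, he⟩ := hbc.exists_eq_range hne
  refine ⟨e, fun n => hb.isOpen (he ▸ mem_range_self n), fun O hO q hq => ?_⟩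
  obtain ⟨v, hv, hqv, hvO⟩ := hb.exists_subset_of_mem_open hq hO
  obtain ⟨n, rfl⟩ := he ▸ hv
  exact ⟨n, hqv, hvO⟩

/-- There is an analytic subset of Cantor space which is not Borel. -/
theorem exists_analytic_not_measurable :
    ∃ B : Set CantorSpace, AnalyticSet B ∧ ¬ MeasurableSet B := by
  classical
  obtain ⟨e, heo, hebasis⟩ := exists_basis_enum
  set C : Set (CantorSpace × W) := {p | ∀ n, p.1 n = true → p.2 ∉ e n} with hC
  have hCclosed : IsClosed C := by
    have hCi : C = ⋂ n, {p : CantorSpace × W | p.1 n = true → p.2 ∉ e n} := by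
      ext p; simp [hC]
    rw [hCi]
    refine isClosed_iInter fun n => ?_
    have : {p : CantorSpace × W | p.1 n = true → p.2 ∉ e n} =
        ((fun p : CantorSpace × W => p.1 n) ⁻¹' {true} ∩ Prod.snd ⁻¹' e n)ᶜ := by
      ext p; by_cases h : p.1 n = true <;> simp [h]
    rw [this]
    refine (IsOpen.inter ?_ ((heo n).preimage continuous_snd)).isClosed_compl
    exact (isOpen_discrete _).preimage ((continuous_apply n).comp continuous_fst)
  have code : ∀ F : Set W, IsClosed F → ∃ y : CantorSpace,
      ∀ q : W, ((y, q) ∈ C ↔ q ∈ F) := by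
    intro F hF
    refine ⟨fun n => decide (e n ⊆ Fᶜ), fun q => ?_⟩
    constructor
    · intro hq
      by_contra hqF
      obtain ⟨n, hqn, hsub⟩ := hebasis Fᶜ hF.isOpen_compl q hqF
      exact hq n (decide_eq_true hsub) hqn
    · intro hqF n hn hq
      exact (of_decide_eq_true hn) hq hqF
  set U : Set (CantorSpace × CantorSpace) := {p | ∃ z : ℕ → ℕ, (p.1, (p.2, z)) ∈ C} with hU
  have hUan : AnalyticSet U := by
    have hUim : U = (fun p : CantorSpace × W => (p.1, p.2.1)) '' C := by
      ext p
      simp only [hU, mem_setOf_eq, mem_image]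
      constructor
      · rintro ⟨z, hz⟩; exact ⟨(p.1, (p.2, z)), hz, rfl⟩
      · rintro ⟨⟨a, b, z⟩, h, rfl⟩; exact ⟨z, h⟩
    rw [hUim]
    exact hCclosed.analyticSet.image_of_continuous
      (continuous_fst.prodMk (continuous_fst.comp continuous_snd))
  have univU : ∀ B : Set CantorSpace, AnalyticSet B →
      ∃ y, ∀ x, ((y, x) ∈ U ↔ x ∈ B) := by
    intro B hB
    have hproj : ∃ F : Set W, IsClosed F ∧ ∀ x, ((∃ z, (x, z) ∈ F) ↔ x ∈ B) := by
      rw [AnalyticSet] at hB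
      rcases hB with rfl | ⟨f, hf, rfl⟩
      · exact ⟨∅, isClosed_empty, by simp⟩
      · refine ⟨{q : W | f q.2 = q.1}, isClosed_eq (hf.comp continuous_snd) continuous_fst, ?_⟩
        intro x
        simp only [mem_setOf_eq, mem_range]
    obtain ⟨F, hFc, hF⟩ := hproj
    obtain ⟨y, hy⟩ := code F hFc
    refine ⟨y, fun x => ?_⟩
    simp only [hU, mem_setOf_eq]
    constructor
    · rintro ⟨z, hz⟩; exact (hF x).1 ⟨z, (hy _).1 hz⟩
    · intro hx; obtain ⟨z, hz⟩ := (hF x).2 hx; exact ⟨z, (hy _).2 hz⟩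
  refine ⟨{x | (x, x) ∈ U}, ?_, ?_⟩
  · have : {x : CantorSpace | (x, x) ∈ U} = (fun x : CantorSpace => (x, x)) ⁻¹' U := rfl
    rw [this]
    exact hUan.preimage (continuous_id.prodMk continuous_id)
  · intro hmeas
    obtain ⟨y, hy⟩ := univU _ hmeas.compl.analyticSet
    have h := hy y
    simp only [mem_compl_iff, mem_setOf_eq] at h
    exact iff_not_self h

end MonotoneAux

/-- There is a monotone analytic subset of the Cantor space which is not Borel. -/
theorem exists_monotone_analytic_not_borel :
    ∃ A : Set CantorSpace, IsMonotoneSet A ∧ AnalyticSet A ∧ ¬ MeasurableSet A := by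
  classical
  obtain ⟨B, hBan, hBnm⟩ := MonotoneAux.exists_analytic_not_measurable
  set g : CantorSpace → CantorSpace :=
    fun x m => if m % 2 = 0 then x (m / 2) else !(x (m / 2)) with hg
  have hgc : Continuous g := by
    refine continuous_pi fun m => ?_
    simp only [hg]
    exact (continuous_apply (m / 2)).if_const _
      (Continuous.comp (g := fun b : Bool => !b) continuous_of_discreteTopology
        (continuous_apply (m / 2)))
  set A : Set CantorSpace :=
    {y | ∃ x, x ∈ B ∧ ∀ n, g x n = true → y n = true} with hA
  have hge : ∀ (x : CantorSpace) (n : ℕ), g x (2 * n) = x n ∧ g x (2 * n + 1) = !(x n) := by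
    intro x n
    have h1 : (2 * n) % 2 = 0 := by omega
    have h2 : (2 * n) / 2 = n := by omega
    have h3 : ¬((2 * n + 1) % 2 = 0) := by omega
    have h4 : (2 * n + 1) / 2 = n := by omega
    constructor
    · simp only [hg]; rw [if_pos h1, h2]
    · simp only [hg]; rw [if_neg h3, h4]
  have hginj : ∀ x x' : CantorSpace, (∀ n, g x' n = true → g x n = true) → x' = x := by
    intro x x' h
    funext n
    cases hx' : x' n with
    | true =>
      have := h (2 * n)
      rw [(hge x' n).1, (hge x n).1, hx'] at this
      exact (this rfl).symm
    | false =>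
      have := h (2 * n + 1)
      rw [(hge x' n).2, (hge x n).2, hx'] at this
      have hb := this rfl
      cases hxn : x n
      · rfl
      · rw [hxn] at hb; simp at hb
  refine ⟨A, ?_, ?_, ?_⟩
  · intro y y' hy hle
    obtain ⟨x, hxB, hx⟩ := hy
    exact ⟨x, hxB, fun n hn => hle n (hx n hn)⟩
  · -- analytic
    have hAim : A = Prod.snd ''
        {p : CantorSpace × CantorSpace | p.1 ∈ B ∧ ∀ n, g p.1 n = true → p.2 n = true} := by
      ext y
      simp only [hA, Set.mem_setOf_eq, Set.mem_image]
      constructor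
      · rintro ⟨x, hxB, hx⟩; exact ⟨(x, y), ⟨hxB, hx⟩, rfl⟩
      · rintro ⟨⟨x, y⟩, ⟨hxB, hx⟩, rfl⟩; exact ⟨x, hxB, hx⟩
    rw [hAim]
    have hS : {p : CantorSpace × CantorSpace | p.1 ∈ B ∧ ∀ n, g p.1 n = true → p.2 n = true}
        = (Prod.fst ⁻¹' B) ∩ {p : CantorSpace × CantorSpace | ∀ n, g p.1 n = true → p.2 n = true} := by
      ext p; simp [Set.mem_setOf_eq]
    have hKclosed : IsClosed
        {p : CantorSpace × CantorSpace | ∀ n, g p.1 n = true → p.2 n = true} := by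
      have : {p : CantorSpace × CantorSpace | ∀ n, g p.1 n = true → p.2 n = true}
          = ⋂ n, {p : CantorSpace × CantorSpace | g p.1 n = true → p.2 n = true} := by
        ext p; simp
      rw [this]
      refine isClosed_iInter fun n => ?_
      have heq : {p : CantorSpace × CantorSpace | g p.1 n = true → p.2 n = true}
          = (fun p : CantorSpace × CantorSpace => (g p.1 n, p.2 n)) ⁻¹'
            {q : Bool × Bool | q.1 = true → q.2 = true} := rfl
      rw [heq]
      exact (isClosed_discrete _).preimage
        (((continuous_apply n).comp (hgc.comp continuous_fst)).prodMk
          ((continuous_apply n).comp continuous_snd))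
    have hanS : AnalyticSet ((Prod.fst ⁻¹' B) ∩
        {p : CantorSpace × CantorSpace | ∀ n, g p.1 n = true → p.2 n = true}) := by
      rw [Set.inter_eq_iInter]
      refine AnalyticSet.iInter fun b => ?_
      cases b
      · exact hKclosed.analyticSet
      · exact hBan.preimage continuous_fst
    rw [hS]
    exact hanS.image_of_continuous continuous_snd
  · -- not Borel
    intro hmeas
    have hpre : g ⁻¹' A = B := by
      ext x
      simp only [Set.mem_preimage, hA, Set.mem_setOf_eq]
      constructor
      · rintro ⟨x', hx'B, hx'⟩
        rwa [hginj x x' hx'] at hx'B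
      · intro hx
        exact ⟨x, hx, fun n hn => hn⟩
    exact hBnm (hpre ▸ hmeas.preimage hgc.measurable)
end

section
/- Let N ≥ 1 and let A, B be disjoint analytic subsets of ℝ^N with A convex. Then there exists a convexly generated set C ⊆ ℝ^N with A ⊆ C and C ∩ B = ∅. -/
open MeasureTheory

/-- `A ⊆ ℝ^N` is *convexly generated* if it belongs to the least family of subsets of `ℝ^N`
which contains all compact convex sets and is closed under countable increasing unions
and countable intersections. -/
inductive ConvexlyGenerated (N : ℕ) : Set (Fin N → ℝ) → Prop
  | compactConvex (K : Set (Fin N → ℝ)) : IsCompact K → Convex ℝ K → ConvexlyGenerated N K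
  | iUnion (f : ℕ → Set (Fin N → ℝ)) : (∀ n, ConvexlyGenerated N (f n)) →
      (∀ n, f n ⊆ f (n + 1)) → ConvexlyGenerated N (⋃ n, f n)
  | iInter (f : ℕ → Set (Fin N → ℝ)) : (∀ n, ConvexlyGenerated N (f n)) →
      ConvexlyGenerated N (⋂ n, f n)

namespace PreissProofAux

open Set Metric

variable {N : ℕ}

/-- Convex hull of a compact set in `ℝ^N` is compact (Carathéodory). -/
lemma isCompact_convexHull' {s : Set (Fin N → ℝ)} (hs : IsCompact s) :
    IsCompact (convexHull ℝ s) := by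
  classical
  rcases s.eq_empty_or_nonempty with rfl | hne
  · simp only [convexHull_empty]; exact isCompact_empty
  obtain ⟨x₀, hx₀⟩ := hne
  set φ : (Fin (N + 1) → ℝ) × (Fin (N + 1) → (Fin N → ℝ)) → (Fin N → ℝ) :=
    fun p => ∑ j, p.1 j • p.2 j with hφdef
  have hφc : Continuous φ := by
    apply continuous_finset_sum
    intro j _
    exact ((continuous_apply j).comp continuous_fst).smul
      ((continuous_apply j).comp continuous_snd)
  have key : convexHull ℝ s =
      φ '' ((stdSimplex ℝ (Fin (N + 1))) ×ˢ (Set.univ.pi fun _ => s)) := by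
    apply Subset.antisymm
    · intro x hx
      obtain ⟨ι, hfin, z, w, hzs, hai, hw0, hw1, hwz⟩ :=
        eq_pos_convex_span_of_mem_convexHull hx
      have hcard : Fintype.card ι ≤ N + 1 := by
        calc Fintype.card ι ≤ Module.finrank ℝ (vectorSpan ℝ (Set.range z)) + 1 :=
              hai.card_le_finrank_succ
          _ ≤ Module.finrank ℝ (Fin N → ℝ) + 1 :=
              Nat.add_le_add_right (Submodule.finrank_le _) 1
          _ = N + 1 := by rw [Module.finrank_fin_fun]
      obtain ⟨e⟩ : Nonempty (ι ↪ Fin (N + 1)) := by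
        apply Function.Embedding.nonempty_of_card_le
        simpa using hcard
      set w' : Fin (N + 1) → ℝ := fun j => if h : ∃ i, e i = j then w h.choose else 0
        with hw'def
      set v : Fin (N + 1) → (Fin N → ℝ) :=
        fun j => if h : ∃ i, e i = j then z h.choose else x₀ with hvdef
      have hwe : ∀ i : ι, w' (e i) = w i := by
        intro i
        have h : ∃ i', e i' = e i := ⟨i, rfl⟩
        simp only [hw'def, dif_pos h]
        exact congrArg w (e.injective h.choose_spec)
      have hve : ∀ i : ι, v (e i) = z i := by
        intro i
        have h : ∃ i', e i' = e i := ⟨i, rfl⟩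
        simp only [hvdef, dif_pos h]
        exact congrArg z (e.injective h.choose_spec)
      have hvanish : ∀ j : Fin (N + 1), j ∉ Finset.univ.map e → w' j = 0 := by
        intro j hj
        have : ¬∃ i, e i = j := by
          intro ⟨i, hi⟩
          exact hj (Finset.mem_map.2 ⟨i, Finset.mem_univ i, hi⟩)
        simp only [hw'def, dif_neg this]
      refine ⟨(w', v), ⟨⟨fun j => ?_, ?_⟩, fun j _ => ?_⟩, ?_⟩
      · simp only [hw'def]
        split_ifs with h
        · exact (hw0 _).le
        · exact le_rfl
      · -- sum of weights is 1
        have h1 : ∑ j, w' j = ∑ j ∈ Finset.univ.map e, w' j :=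
          (Finset.sum_subset (Finset.subset_univ _) fun j _ hj => hvanish j hj).symm
        calc ∑ j, w' j = ∑ i, w i := by
              rw [h1, Finset.sum_map]
              exact Finset.sum_congr rfl fun i _ => hwe i
          _ = 1 := hw1
      · -- v j ∈ s
        simp only [hvdef]
        split_ifs with h
        · exact hzs ⟨h.choose, rfl⟩
        · exact hx₀
      · -- φ (w', v) = x
        have h1 : ∑ j, w' j • v j = ∑ j ∈ Finset.univ.map e, w' j • v j :=
          (Finset.sum_subset (Finset.subset_univ _) fun j _ hj => by
            rw [hvanish j hj, zero_smul]).symm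
        show ∑ j, w' j • v j = x
        calc ∑ j, w' j • v j = ∑ i, w i • z i := by
              rw [h1, Finset.sum_map]
              exact Finset.sum_congr rfl fun i _ => by rw [hwe i, hve i]
          _ = x := hwz
    · rintro x ⟨⟨w, v⟩, ⟨hw, hv⟩, rfl⟩
      exact (convex_convexHull ℝ s).sum_mem (fun j _ => hw.1 j) hw.2
        (fun j _ => subset_convexHull ℝ s (hv j (mem_univ j)))
  rw [key]
  exact (((isCompact_stdSimplex ℝ (Fin (N + 1))).prod (isCompact_univ_pi fun _ => hs)).image hφc)

/-- The separation property. -/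
def Sep (N : ℕ) (X Y : Set (Fin N → ℝ)) : Prop :=
  ∃ C, ConvexlyGenerated N C ∧ X ⊆ C ∧ C ∩ Y = ∅

/-- `XSet γ n` is the set of sequences bounded by `γ` on the first `n` coordinates. -/
def XSet (γ : ℕ → ℕ) (n : ℕ) : Set (ℕ → ℕ) := {σ | ∀ i, i < n → σ i ≤ γ i}

/-- `YSet τ n` is the set of sequences agreeing with `τ` on the first `n` coordinates. -/
def YSet (τ : ℕ → ℕ) (n : ℕ) : Set (ℕ → ℕ) := {σ | ∀ i, i < n → σ i = τ i}

lemma XSet_congr {γ γ' : ℕ → ℕ} {n : ℕ} (h : ∀ i, i < n → γ i = γ' i) :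
    XSet γ n = XSet γ' n := by
  ext σ
  constructor <;> intro hσ i hi
  · rw [← h i hi]; exact hσ i hi
  · rw [h i hi]; exact hσ i hi

lemma YSet_congr {τ τ' : ℕ → ℕ} {n : ℕ} (h : ∀ i, i < n → τ i = τ' i) :
    YSet τ n = YSet τ' n := by
  ext σ
  constructor <;> intro hσ i hi
  · rw [← h i hi]; exact hσ i hi
  · rw [h i hi]; exact hσ i hi

lemma XSet_zero (γ : ℕ → ℕ) : XSet γ 0 = univ := by
  ext σ; simp [XSet]

lemma YSet_zero (τ : ℕ → ℕ) : YSet τ 0 = univ := by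
  ext σ; simp [YSet]

/-- The key combination step: if all `(m, k)`-children are separated, so is the parent. -/
lemma sep_step {f g : (ℕ → ℕ) → (Fin N → ℝ)} {γ τ : ℕ → ℕ} {n : ℕ}
    (h : ∀ m k, Sep N (f '' XSet (Function.update γ n m) (n + 1))
      (g '' YSet (Function.update τ n k) (n + 1))) :
    Sep N (f '' XSet γ n) (g '' YSet τ n) := by
  choose T hcg hsub hdis using h
  refine ⟨⋃ p, ⋂ j, ⋂ k, T (p + j) k, ?_, ?_, ?_⟩
  · refine ConvexlyGenerated.iUnion _ (fun p => ConvexlyGenerated.iInter _ fun j =>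
      ConvexlyGenerated.iInter _ fun k => hcg _ _) (fun p => ?_)
    intro x hx
    simp only [mem_iInter] at hx ⊢
    intro j k
    have := hx (j + 1) k
    rwa [show p + (j + 1) = p + 1 + j by omega] at this
  · rintro x ⟨σ, hσ, rfl⟩
    refine mem_iUnion.2 ⟨σ n, ?_⟩
    simp only [mem_iInter]
    intro j k
    refine hsub _ k ⟨σ, fun i hi => ?_, rfl⟩
    rcases Nat.lt_or_ge i n with h' | h'
    · rw [Function.update_of_ne (by omega)]; exact hσ i h'
    · have hin : i = n := by omega
      subst hin
      rw [Function.update_self]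
      omega
  · ext x
    simp only [mem_inter_iff, mem_empty_iff_false, iff_false, not_and]
    intro hx hxY
    obtain ⟨σ, hσ, rfl⟩ := hxY
    obtain ⟨p, hp⟩ := mem_iUnion.1 hx
    simp only [mem_iInter] at hp
    have h1 : g σ ∈ T (p + 0) (σ n) := hp 0 (σ n)
    have h2 : g σ ∈ g '' YSet (Function.update τ n (σ n)) (n + 1) := by
      refine ⟨σ, fun i hi => ?_, rfl⟩
      rcases Nat.lt_or_ge i n with h' | h'
      · rw [Function.update_of_ne (by omega)]; exact hσ i h'
      · have hin : i = n := by omega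
        subst hin
        rw [Function.update_self]
    have := hdis (p + 0) (σ n)
    rw [Set.eq_empty_iff_forall_notMem] at this
    exact this (g σ) ⟨h1, h2⟩

/-- Basic open cylinders in Baire space. -/
lemma exists_cyl_subset {U : Set (ℕ → ℕ)} (hU : IsOpen U) {σ : ℕ → ℕ} (hσ : σ ∈ U) :
    ∃ n, ∀ ρ : ℕ → ℕ, (∀ i, i < n → ρ i = σ i) → ρ ∈ U := by
  obtain ⟨I, u, h1, h2⟩ := isOpen_pi_iff.1 hU σ hσ
  refine ⟨(I.sup id) + 1, fun ρ hρ => h2 ?_⟩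
  intro i hi
  rw [hρ i (by have := Finset.le_sup (f := id) hi; simp only [id] at this; omega)]
  exact (h1 i hi).2

/-- Compactness of `{σ | σ ≤ γ}` gives a uniform bound. -/
lemma exists_bound_subset {U : Set (ℕ → ℕ)} (hU : IsOpen U) (γ : ℕ → ℕ)
    (hsub : {σ : ℕ → ℕ | ∀ i, σ i ≤ γ i} ⊆ U) :
    ∃ n, ∀ σ : ℕ → ℕ, (∀ i, i < n → σ i ≤ γ i) → σ ∈ U := by
  set K := {σ : ℕ → ℕ | ∀ i, σ i ≤ γ i} with hKdef
  have hK : IsCompact K := by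
    have : K = Set.pi Set.univ (fun i => Set.Iic (γ i)) := by
      ext σ; simp [hKdef, Set.mem_pi, Pi.le_def]
    rw [this]
    exact isCompact_univ_pi fun i => (Set.finite_Iic _).isCompact
  have hc : ∀ x : ℕ → ℕ, x ∈ K → ∃ n, ∀ ρ : ℕ → ℕ, (∀ i, i < n → ρ i = x i) → ρ ∈ U :=
    fun x hx => exists_cyl_subset hU (hsub hx)
  choose! nx hnx using hc
  have hopen : ∀ x ∈ K, IsOpen {ρ : ℕ → ℕ | ∀ i, i < nx x → ρ i = x i} := by
    intro x _
    have : {ρ : ℕ → ℕ | ∀ i, i < nx x → ρ i = x i}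
        = Set.pi ↑(Finset.range (nx x)) (fun i => {x i}) := by
      ext ρ; simp [Set.mem_pi]
    rw [this]
    exact isOpen_set_pi (Finset.range (nx x)).finite_toSet (fun a _ => isOpen_discrete _)
  have hcov : K ⊆ ⋃ x ∈ K, {ρ : ℕ → ℕ | ∀ i, i < nx x → ρ i = x i} :=
    fun x hx => mem_biUnion hx (fun i _ => rfl)
  obtain ⟨b, hbK, hbfin, hbcov⟩ := hK.elim_finite_subcover_image hopen hcov
  refine ⟨hbfin.toFinset.sup nx, fun σ hσ => ?_⟩
  set σ' : ℕ → ℕ := fun i => min (σ i) (γ i) with hσ'def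
  have hσ'K : σ' ∈ K := fun i => min_le_right _ _
  obtain ⟨x, hxb, hxmem⟩ := mem_iUnion₂.1 (hbcov hσ'K)
  have hxn : nx x ≤ hbfin.toFinset.sup nx :=
    Finset.le_sup (hbfin.mem_toFinset.2 hxb)
  refine hnx x (hbK hxb) σ fun i hi => ?_
  have h1 : σ i ≤ γ i := hσ i (lt_of_lt_of_le hi hxn)
  have h2 : σ' i = x i := hxmem i hi
  rw [← h2, hσ'def]
  simp [min_eq_left h1]

/-- The geometric limit lemma: along any branch pair, separation eventually holds. -/
lemma sep_limit {f g : (ℕ → ℕ) → (Fin N → ℝ)} (hf : Continuous f) (hg : Continuous g)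
    (hconv : Convex ℝ (Set.range f)) (hdisj : Disjoint (Set.range f) (Set.range g))
    (γ τ : ℕ → ℕ) :
    ∃ n, Sep N (f '' XSet γ n) (g '' YSet τ n) := by
  set K : Set (ℕ → ℕ) := {σ | ∀ i, σ i ≤ γ i} with hKdef
  have hKc : IsCompact K := by
    have : K = Set.pi Set.univ (fun i => Set.Iic (γ i)) := by
      ext σ; simp [hKdef, Set.mem_pi, Pi.le_def]
    rw [this]
    exact isCompact_univ_pi fun i => (Set.finite_Iic _).isCompact
  have hKne : K.Nonempty := ⟨fun _ => 0, fun i => Nat.zero_le _⟩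
  set Z := convexHull ℝ (f '' K) with hZdef
  have hZc : IsCompact Z := isCompact_convexHull' (hKc.image hf)
  have hZconv : Convex ℝ Z := convex_convexHull _ _
  have hZne : Z.Nonempty := by
    obtain ⟨σ, hσ⟩ := hKne
    exact ⟨f σ, subset_convexHull ℝ _ ⟨σ, hσ, rfl⟩⟩
  have hZA : Z ⊆ Set.range f := convexHull_min (image_subset_range f K) hconv
  set b := g τ with hbdef
  have hbZ : b ∉ Z := by
    intro h
    exact Set.disjoint_left.1 hdisj (hZA h) (mem_range_self τ)
  set d := infDist b Z with hddef
  have hd0 : 0 < d := (hZc.isClosed.notMem_iff_infDist_pos hZne).1 hbZ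
  set ε := d / 3 with hεdef
  have hε0 : 0 < ε := by positivity
  set V := thickening ε Z with hVdef
  have hVopen : IsOpen V := isOpen_thickening
  have hVconv : Convex ℝ V := hZconv.thickening ε
  have hKV : K ⊆ f ⁻¹' V := fun σ hσ =>
    self_subset_thickening hε0 Z (subset_convexHull ℝ _ ⟨σ, hσ, rfl⟩)
  obtain ⟨n2, hn2⟩ := exists_bound_subset (hVopen.preimage hf) γ hKV
  have hτmem : τ ∈ g ⁻¹' (ball b ε) := by
    simp only [Set.mem_preimage, mem_ball, ← hbdef, dist_self]
    exact hε0
  obtain ⟨n1, hn1⟩ := exists_cyl_subset (isOpen_ball.preimage hg) hτmem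
  refine ⟨max n1 n2, ?_⟩
  set D := closure (convexHull ℝ (f '' XSet γ (max n1 n2))) with hDdef
  have hXV : f '' XSet γ (max n1 n2) ⊆ V := by
    rintro x ⟨σ, hσ, rfl⟩
    exact hn2 σ (fun i hi => hσ i (lt_of_lt_of_le hi (le_max_right _ _)))
  have hDsub : D ⊆ cthickening ε Z :=
    closure_minimal ((convexHull_min hXV hVconv).trans (thickening_subset_cthickening ε Z))
      isClosed_cthickening
  have hDc : IsCompact D := hZc.cthickening.of_isClosed_subset isClosed_closure hDsub
  refine ⟨D, ConvexlyGenerated.compactConvex D hDc ((convex_convexHull ℝ _).closure),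
    (subset_convexHull ℝ _).trans subset_closure, ?_⟩
  ext x
  simp only [mem_inter_iff, mem_empty_iff_false, iff_false, not_and]
  intro hxD hxY
  obtain ⟨σ, hσ, hgσ⟩ := hxY
  have hball : x ∈ ball b ε := by
    rw [← hgσ]
    exact hn1 σ (fun i hi => hσ i (lt_of_lt_of_le hi (le_max_left _ _)))
  have hinf : infDist x Z ≤ ε := by
    have hmem := hDsub hxD
    rw [mem_cthickening_iff] at hmem
    exact ENNReal.toReal_le_of_le_ofReal hε0.le hmem
  have htri : d ≤ infDist x Z + dist b x := infDist_le_infDist_add_dist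
  have hdist : dist b x < ε := by rwa [dist_comm, ← mem_ball]
  have : d < 2 * ε := by linarith
  rw [hεdef] at this
  linarith

end PreissProofAux

open PreissProofAux Set

/-- **Preiss separation**: disjoint analytic subsets `A, B` of `ℝ^N` with `A` convex can be
separated by a convexly generated set. -/
theorem preiss_separation (N : ℕ) (hN : 1 ≤ N) (A B : Set (Fin N → ℝ))
    (hA : AnalyticSet A) (hB : AnalyticSet B) (hdisj : Disjoint A B)
    (hconv : Convex ℝ A) :
    ∃ C : Set (Fin N → ℝ), ConvexlyGenerated N C ∧ A ⊆ C ∧ C ∩ B = ∅ := by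
  classical
  rw [MeasureTheory.AnalyticSet] at hA hB
  rcases hA with rfl | ⟨f, hfc, rfl⟩
  · exact ⟨∅, ConvexlyGenerated.compactConvex ∅ isCompact_empty convex_empty,
      Subset.rfl, by simp⟩
  rcases hB with rfl | ⟨g, hgc, rfl⟩
  · refine ⟨univ, ?_, subset_univ _, by simp⟩
    have huniv : (Set.univ : Set (Fin N → ℝ)) = ⋃ n : ℕ, Metric.closedBall 0 n := by
      ext x
      simp only [mem_univ, true_iff, mem_iUnion, Metric.mem_closedBall]
      obtain ⟨n, hn⟩ := exists_nat_ge (dist x 0)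
      exact ⟨n, hn⟩
    rw [huniv]
    exact ConvexlyGenerated.iUnion _
      (fun n => ConvexlyGenerated.compactConvex _ (isCompact_closedBall _ _)
        (convex_closedBall _ _))
      (fun n => Metric.closedBall_subset_closedBall (by exact_mod_cast Nat.le_succ n))
  by_contra hc
  have hnsep : ¬ Sep N (Set.range f) (Set.range g) := hc
  -- the recursion producing the bad branch
  let stepFn : ℕ → (ℕ → ℕ) × (ℕ → ℕ) → (ℕ → ℕ) × (ℕ → ℕ) := fun n p =>
    if h : ∃ m k, ¬ Sep N (f '' XSet (Function.update p.1 n m) (n + 1))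
        (g '' YSet (Function.update p.2 n k) (n + 1)) then
      (Function.update p.1 n h.choose, Function.update p.2 n h.choose_spec.choose)
    else p
  let q : ℕ → (ℕ → ℕ) × (ℕ → ℕ) := fun n =>
    Nat.rec ((fun _ => 0 : ℕ → ℕ), (fun _ => 0 : ℕ → ℕ)) stepFn n
  have hqsucc : ∀ n, q (n + 1) = stepFn n (q n) := fun n => rfl
  -- invariant
  have hq : ∀ n, ¬ Sep N (f '' XSet (q n).1 n) (g '' YSet (q n).2 n) := by
    intro n
    induction n with
    | zero =>
      rw [XSet_zero, YSet_zero, Set.image_univ, Set.image_univ]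
      exact hnsep
    | succ n ih =>
      have hex : ∃ m k, ¬ Sep N (f '' XSet (Function.update (q n).1 n m) (n + 1))
          (g '' YSet (Function.update (q n).2 n k) (n + 1)) := by
        by_contra h
        push_neg at h
        exact ih (sep_step h)
      rw [hqsucc n]
      show ¬ Sep N (f '' XSet (stepFn n (q n)).1 (n + 1))
        (g '' YSet (stepFn n (q n)).2 (n + 1))
      have : stepFn n (q n) = (Function.update (q n).1 n hex.choose,
          Function.update (q n).2 n hex.choose_spec.choose) := dif_pos hex
      rw [this]
      exact hex.choose_spec.choose_spec
  -- stability of coordinates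
  have hstab : ∀ n i, i < n → (q (n + 1)).1 i = (q n).1 i ∧ (q (n + 1)).2 i = (q n).2 i := by
    intro n i hi
    rw [hqsucc n]
    show (stepFn n (q n)).1 i = _ ∧ (stepFn n (q n)).2 i = _
    by_cases h : ∃ m k, ¬ Sep N (f '' XSet (Function.update (q n).1 n m) (n + 1))
        (g '' YSet (Function.update (q n).2 n k) (n + 1))
    · have heq : stepFn n (q n) = (Function.update (q n).1 n h.choose,
          Function.update (q n).2 n h.choose_spec.choose) := dif_pos h
      rw [heq]
      exact ⟨Function.update_of_ne (by omega) _ _, Function.update_of_ne (by omega) _ _⟩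
    · have heq : stepFn n (q n) = q n := dif_neg h
      rw [heq]
      exact ⟨rfl, rfl⟩
  set Γ : ℕ → ℕ := fun i => (q (i + 1)).1 i with hΓdef
  set T : ℕ → ℕ := fun i => (q (i + 1)).2 i with hTdef
  have hagree : ∀ n i, i < n → (q n).1 i = Γ i ∧ (q n).2 i = T i := by
    intro n
    induction n with
    | zero => intro i hi; omega
    | succ n ih =>
      intro i hi
      rcases Nat.lt_or_ge i n with h' | h'
      · obtain ⟨h1, h2⟩ := hstab n i h'
        obtain ⟨h3, h4⟩ := ih i h'
        exact ⟨h1.trans h3, h2.trans h4⟩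
      · have hin : i = n := by omega
        subst hin
        exact ⟨rfl, rfl⟩
  -- contradiction via the limit lemma
  have hrange : Disjoint (Set.range f) (Set.range g) := hdisj
  obtain ⟨n, hn⟩ := sep_limit hfc hgc hconv hrange Γ T
  apply hq n
  rwa [XSet_congr (fun i hi => (hagree n i hi).1),
    YSet_congr (fun i hi => (hagree n i hi).2)]
end

section
/- For N ≥ 1, a subset of ℝ^N is convexly generated if and only if it belongs to the least family of subsets of ℝ^N which contains all open convex sets and is closed under countable increasing unions and countable intersections. -/
/-- The least family of subsets of `ℝ^N` containing all open convex sets and closed under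
countable increasing unions and countable intersections. -/
inductive ConvexlyGeneratedFromOpen (N : ℕ) : Set (Fin N → ℝ) → Prop
  | openConvex (U : Set (Fin N → ℝ)) : IsOpen U → Convex ℝ U → ConvexlyGeneratedFromOpen N U
  | iUnion (f : ℕ → Set (Fin N → ℝ)) : (∀ n, ConvexlyGeneratedFromOpen N (f n)) →
      (∀ n, f n ⊆ f (n + 1)) → ConvexlyGeneratedFromOpen N (⋃ n, f n)
  | iInter (f : ℕ → Set (Fin N → ℝ)) : (∀ n, ConvexlyGeneratedFromOpen N (f n)) →
      ConvexlyGeneratedFromOpen N (⋂ n, f n)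

open Metric Set

/-- A closed set in a metric space equals the intersection of its `1/(n+1)`-thickenings. -/
lemma aux_isClosed_eq_iInter_thickening {α : Type*} [MetricSpace α] {K : Set α}
    (hK : IsClosed K) (hne : K.Nonempty) :
    K = ⋂ n : ℕ, Metric.thickening (1 / (n + 1 : ℝ)) K := by
  ext x
  simp only [Set.mem_iInter]
  constructor
  · intro hx n
    exact Metric.self_subset_thickening (by positivity) K hx
  · intro h
    have h0 : Metric.infDist x K = 0 := by
      refine le_antisymm ?_ Metric.infDist_nonneg
      by_contra hlt
      push_neg at hlt
      obtain ⟨n, hn⟩ := exists_nat_one_div_lt hlt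
      obtain ⟨z, hz, hdz⟩ := Metric.mem_thickening_iff.mp (h n)
      exact lt_irrefl _ (hn.trans ((Metric.infDist_le_dist_of_mem hz).trans_lt hdz))
    rw [← hK.closure_eq]
    exact (Metric.mem_closure_iff_infDist_zero hne).mpr h0

lemma aux_fromOpen_of_compactConvex (N : ℕ) (K : Set (Fin N → ℝ))
    (hK : IsCompact K) (hc : Convex ℝ K) : ConvexlyGeneratedFromOpen N K := by
  rcases K.eq_empty_or_nonempty with rfl | hne
  · exact .openConvex ∅ isOpen_empty convex_empty
  · rw [aux_isClosed_eq_iInter_thickening hK.isClosed hne]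
    exact .iInter _ fun n => .openConvex _ Metric.isOpen_thickening (hc.thickening _)

/-- The "deep ball" set `{y | ball y ε ⊆ U}` is convex when `U` is. -/
lemma aux_convex_deep {N : ℕ} {U : Set (Fin N → ℝ)} (hU : Convex ℝ U) (ε : ℝ) :
    Convex ℝ {y | Metric.ball y ε ⊆ U} := by
  intro y hy z hz a b ha hb hab
  intro w hw
  set c := a • y + b • z with hc
  set d := w - c with hd
  have hdn : ‖d‖ < ε := by
    have : dist w c < ε := by simpa [Metric.mem_ball] using hw
    simpa [hd, dist_eq_norm] using this
  have hy' : y + d ∈ U := hy (by simpa [Metric.mem_ball, dist_eq_norm] using hdn)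
  have hz' : z + d ∈ U := hz (by simpa [Metric.mem_ball, dist_eq_norm] using hdn)
  have key : a • (y + d) + b • (z + d) = w := by
    have h1 : a • (y + d) + b • (z + d) = a • y + b • z + (a + b) • d := by
      rw [smul_add, smul_add, add_smul]; abel
    rw [h1, hab, one_smul, hd, hc]; abel
  rw [← key]
  exact hU hy' hz' ha hb hab

lemma aux_cg_of_openConvex (N : ℕ) (U : Set (Fin N → ℝ))
    (hU : IsOpen U) (hc : Convex ℝ U) : ConvexlyGenerated N U := by
  rcases U.eq_empty_or_nonempty with rfl | ⟨x0, hx0⟩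
  · exact .compactConvex ∅ isCompact_empty convex_empty
  rcases eq_or_ne U Set.univ with rfl | hne
  · rw [← Metric.iUnion_closedBall_nat x0]
    refine .iUnion _ (fun n => .compactConvex _ (isCompact_closedBall _ _)
      (convex_closedBall _ _)) (fun n => Metric.closedBall_subset_closedBall (by exact_mod_cast Nat.le_succ n))
  · have hcne : Uᶜ.Nonempty := Set.nonempty_compl.mpr hne
    -- characterization: ε ≤ infDist y Uᶜ ↔ ball y ε ⊆ U, for ε > 0
    have hchar : ∀ (ε : ℝ), 0 < ε → ∀ y : Fin N → ℝ,
        ε ≤ Metric.infDist y Uᶜ ↔ Metric.ball y ε ⊆ U := by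
      intro ε hε y
      constructor
      · intro h w hw
        by_contra hwU
        have : Metric.infDist y Uᶜ ≤ dist y w :=
          Metric.infDist_le_dist_of_mem hwU
        have : Metric.infDist y Uᶜ < ε := this.trans_lt (by rwa [dist_comm, ← Metric.mem_ball])
        exact absurd h this.not_ge
      · intro h
        by_contra hlt
        push_neg at hlt
        obtain ⟨z, hz, hdz⟩ := (Metric.infDist_lt_iff hcne).mp hlt
        exact hz (h (by rwa [Metric.mem_ball, dist_comm]))
    set f : ℕ → Set (Fin N → ℝ) := fun n =>
      Metric.closedBall x0 (n + 1) ∩ {y | 1 / (n + 1 : ℝ) ≤ Metric.infDist y Uᶜ} with hf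
    have hUf : U = ⋃ n, f n := by
      ext y
      simp only [Set.mem_iUnion, hf, Set.mem_inter_iff, Set.mem_setOf_eq]
      constructor
      · intro hy
        obtain ⟨ε, hε, hball⟩ := Metric.isOpen_iff.mp hU y hy
        obtain ⟨n1, hn1⟩ := exists_nat_one_div_lt hε
        obtain ⟨n2, hn2⟩ := exists_nat_ge (dist y x0)
        refine ⟨max n1 n2, ?_, ?_⟩
        · refine Metric.mem_closedBall.mpr (hn2.trans ?_)
          have : (n2 : ℝ) ≤ (max n1 n2 : ℕ) := by exact_mod_cast le_max_right n1 n2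
          linarith
        · have h1 : (1 : ℝ) / (max n1 n2 + 1) ≤ 1 / (n1 + 1) := by
            apply one_div_le_one_div_of_le (by positivity)
            have : (n1 : ℝ) ≤ (max n1 n2 : ℕ) := by exact_mod_cast le_max_left n1 n2
            linarith
          have h2 : ε ≤ Metric.infDist y Uᶜ := (hchar ε hε y).mpr hball
          linarith
      · rintro ⟨n, -, hy⟩
        by_contra hyU
        have : Metric.infDist y Uᶜ = 0 := Metric.infDist_zero_of_mem hyU
        rw [this] at hy
        have : (0:ℝ) < 1 / (n + 1 : ℝ) := by positivity
        linarith
    rw [hUf]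
    refine .iUnion f (fun n => ?_) (fun n => ?_)
    · refine .compactConvex _ ?_ ?_
      · exact (isCompact_closedBall x0 _).inter_right
          (isClosed_le continuous_const (Metric.continuous_infDist_pt Uᶜ))
      · refine (convex_closedBall _ _).inter ?_
        have hpos : (0:ℝ) < 1 / (n + 1 : ℝ) := by positivity
        have : {y | 1 / (n + 1 : ℝ) ≤ Metric.infDist y Uᶜ}
            = {y | Metric.ball y (1 / (n + 1 : ℝ)) ⊆ U} := by
          ext y; exact hchar _ hpos y
        rw [this]
        exact aux_convex_deep hc _
    · refine Set.inter_subset_inter ?_ ?_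
      · exact Metric.closedBall_subset_closedBall (by push_cast; linarith)
      · intro y hy
        simp only [Set.mem_setOf_eq] at hy ⊢
        have : (1:ℝ) / (n + 1 + 1) ≤ 1 / (n + 1) :=
          one_div_le_one_div_of_le (by positivity) (by linarith)
        push_cast
        linarith

/-- A subset of `ℝ^N` is convexly generated iff it belongs to the least family containing
all open convex sets and closed under countable increasing unions and countable
intersections. -/
theorem convexlyGenerated_iff_fromOpen (N : ℕ) (hN : 1 ≤ N) (A : Set (Fin N → ℝ)) :
    ConvexlyGenerated N A ↔ ConvexlyGeneratedFromOpen N A := by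
  constructor
  · intro h
    induction h with
    | compactConvex K hK hc => exact aux_fromOpen_of_compactConvex N K hK hc
    | iUnion f _ hmono ih => exact .iUnion f ih hmono
    | iInter f _ ih => exact .iInter f ih
  · intro h
    induction h with
    | openConvex U hU hc => exact aux_cg_of_openConvex N U hU hc
    | iUnion f _ hmono ih => exact .iUnion f ih hmono
    | iInter f _ ih => exact .iInter f ih
end

section
/- For every N ≥ 1 there is a continuous bijection π : ℕ^ℕ → ℝ^N such that for every nonempty finite sequence u ∈ ℕ^{<ℕ}, the image π[N_u] of the cylinder N_u is a product of N half-open intervals [p_1, q_1) × ⋯ × [p_N, q_N) with rational endpoints p_i, q_i. -/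
noncomputable def bZ : ℕ ≃ ℤ := (Denumerable.eqv ℤ).symm

def bchild (p : ℚ × ℚ) (k : ℕ) : ℚ × ℚ :=
  (p.2 - (p.2 - p.1)/2^k, p.2 - (p.2 - p.1)/2^(k+1))

noncomputable def bA (α : ℕ → ℕ) : ℕ → ℚ × ℚ
  | 0 => ((bZ (α 0) : ℚ), (bZ (α 0) : ℚ) + 1)
  | n+1 => bchild (bA α n) (α (n+1))

lemma bchild_lt {p : ℚ × ℚ} (h : p.1 < p.2) (k : ℕ) : (bchild p k).1 < (bchild p k).2 := by
  simp only [bchild]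
  have h2 : (0:ℚ) < p.2 - p.1 := by linarith
  have : (p.2 - p.1)/2^(k+1) < (p.2 - p.1)/2^k := by
    apply div_lt_div_of_pos_left h2 (by positivity)
    exact pow_lt_pow_right₀ (by norm_num) (Nat.lt_succ_self k)
  linarith

lemma bchild_left_le {p : ℚ × ℚ} (h : p.1 < p.2) (k : ℕ) : p.1 ≤ (bchild p k).1 := by
  simp only [bchild]
  have h2 : (0:ℚ) < p.2 - p.1 := by linarith
  have : (p.2 - p.1)/2^k ≤ (p.2 - p.1)/2^0 := by
    apply div_le_div_of_nonneg_left h2.le (by positivity)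
    exact one_le_pow₀ (by norm_num)
  linarith

lemma bchild_right_lt {p : ℚ × ℚ} (h : p.1 < p.2) (k : ℕ) : (bchild p k).2 < p.2 := by
  simp only [bchild]
  have h2 : (0:ℚ) < p.2 - p.1 := by linarith
  have : (0:ℚ) < (p.2 - p.1)/2^(k+1) := by positivity
  linarith

lemma bchild_len {p : ℚ × ℚ} (h : p.1 < p.2) (k : ℕ) :
    (bchild p k).2 - (bchild p k).1 ≤ (p.2 - p.1)/2 := by
  simp only [bchild]
  have h2 : (0:ℚ) < p.2 - p.1 := by linarith
  have e : (p.2 - (p.2 - p.1)/2^(k+1)) - (p.2 - (p.2 - p.1)/2^k) = (p.2 - p.1)/2^(k+1) := by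
    field_simp
    ring
  rw [e]
  apply div_le_div_of_nonneg_left h2.le (by norm_num)
  calc (2:ℚ) = 2^1 := (pow_one 2).symm
  _ ≤ 2^(k+1) := pow_le_pow_right₀ (by norm_num) (by omega)

lemma bA_lt (α : ℕ → ℕ) : ∀ n, (bA α n).1 < (bA α n).2 := by
  intro n
  induction n with
  | zero => simp [bA]
  | succ n ih => exact bchild_lt ih _

lemma bA_left_le (α : ℕ → ℕ) (n : ℕ) : (bA α n).1 ≤ (bA α (n+1)).1 :=
  bchild_left_le (bA_lt α n) _

lemma bA_left_mono (α : ℕ → ℕ) : Monotone (fun n => (bA α n).1) :=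
  monotone_nat_of_le_succ (bA_left_le α)

lemma bA_right_lt (α : ℕ → ℕ) (n : ℕ) : (bA α (n+1)).2 < (bA α n).2 :=
  bchild_right_lt (bA_lt α n) _

lemma bA_right_anti (α : ℕ → ℕ) : Antitone (fun n => (bA α n).2) :=
  antitone_nat_of_succ_le (fun n => (bA_right_lt α n).le)

lemma bA_le (α : ℕ → ℕ) (n m : ℕ) : (bA α n).1 ≤ (bA α m).2 := by
  rcases le_total n m with h | h
  · exact le_trans (bA_left_mono α h) (bA_lt α m).le
  · exact le_trans (bA_lt α n).le (bA_right_anti α h)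

lemma bA_len (α : ℕ → ℕ) : ∀ n, (bA α n).2 - (bA α n).1 ≤ (1/2)^n := by
  intro n
  induction n with
  | zero => simp [bA]
  | succ n ih =>
      have := bchild_len (bA_lt α n) (α (n+1))
      have h2 : ((1:ℚ)/2)^(n+1) = ((1/2)^n)/2 := by ring
      rw [h2]
      calc (bA α (n+1)).2 - (bA α (n+1)).1 ≤ ((bA α n).2 - (bA α n).1)/2 := this
      _ ≤ ((1/2)^n)/2 := by linarith

lemma bA_congr {α β : ℕ → ℕ} : ∀ n, (∀ i ≤ n, α i = β i) → bA α n = bA β n := by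
  intro n
  induction n with
  | zero => intro h; simp [bA, h 0 le_rfl]
  | succ n ih =>
      intro h
      simp only [bA]
      rw [ih (fun i hi => h i (by omega)), h (n+1) le_rfl]

noncomputable def bf (α : ℕ → ℕ) : ℝ := ⨆ n, ((bA α n).1 : ℝ)

lemma bf_bdd (α : ℕ → ℕ) : BddAbove (Set.range fun n => ((bA α n).1 : ℝ)) := by
  refine ⟨((bA α 0).2 : ℝ), ?_⟩
  rintro x ⟨n, rfl⟩
  show ((bA α n).1 : ℝ) ≤ _
  exact_mod_cast bA_le α n 0

lemma bf_mem (α : ℕ → ℕ) (n : ℕ) :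
    bf α ∈ Set.Ico ((bA α n).1 : ℝ) ((bA α n).2 : ℝ) := by
  constructor
  · exact le_ciSup (bf_bdd α) n
  · have h : bf α ≤ ((bA α (n+1)).2 : ℝ) := by
      apply ciSup_le
      intro m
      exact_mod_cast bA_le α m (n+1)
    exact lt_of_le_of_lt h (by exact_mod_cast bA_right_lt α n)

lemma bf_eq {α : ℕ → ℕ} {x : ℝ}
    (h : ∀ n, x ∈ Set.Ico ((bA α n).1 : ℝ) ((bA α n).2 : ℝ)) : bf α = x := by
  apply le_antisymm
  · exact ciSup_le (fun n => (h n).1)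
  · apply le_of_forall_pos_le_add
    intro ε hε
    obtain ⟨n, hn⟩ := exists_pow_lt_of_lt_one hε (by norm_num : (1:ℝ)/2 < 1)
    have h1 : x < ((bA α n).2 : ℝ) := (h n).2
    have h2 : ((bA α n).2 : ℝ) - ((bA α n).1 : ℝ) ≤ (1/2)^n := by
      have := bA_len α n
      have : (((bA α n).2 - (bA α n).1 : ℚ) : ℝ) ≤ (((1:ℚ)/2)^n : ℚ) := by exact_mod_cast this
      push_cast at this
      linarith
    have h3 : ((bA α n).1 : ℝ) ≤ bf α := (bf_mem α n).1
    linarith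

lemma bpick_exists {p : ℚ × ℚ} {x : ℝ} (hp : p.1 < p.2) (hx : x < (p.2 : ℝ)) :
    ∃ k : ℕ, x < (p.2 : ℝ) - ((p.2 - p.1 : ℚ) : ℝ)/2^(k+1) := by
  have hd : (0:ℝ) < (p.2:ℝ) - x := by linarith
  obtain ⟨n, hn⟩ := exists_pow_lt_of_lt_one
    (show (0:ℝ) < ((p.2:ℝ) - x)/(((p.2 - p.1 : ℚ):ℝ)) by
      apply div_pos hd; exact_mod_cast sub_pos.mpr hp)
    (by norm_num : (1:ℝ)/2 < 1)
  refine ⟨n, ?_⟩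
  have hq : (0:ℝ) < ((p.2 - p.1 : ℚ) : ℝ) := by exact_mod_cast sub_pos.mpr hp
  rw [lt_div_iff₀ hq] at hn
  have key : ((p.2 - p.1 : ℚ) : ℝ)/2^(n+1) ≤ (1/2)^n * ((p.2 - p.1 : ℚ) : ℝ) := by
    rw [div_le_iff₀ (by positivity : (0:ℝ) < (2:ℝ)^(n+1))]
    have h3 : ((1:ℝ)/2)^n * (2:ℝ)^(n+1) = 2 := by
      rw [div_pow, one_pow, pow_succ]
      field_simp
    nlinarith [hq.le]
  linarith

open Classical in
noncomputable def bpick (p : ℚ × ℚ) (x : ℝ) : ℕ :=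
  if h : ∃ k : ℕ, x < (p.2 : ℝ) - ((p.2 - p.1 : ℚ) : ℝ)/2^(k+1) then Nat.find h else 0

lemma bpick_spec {p : ℚ × ℚ} {x : ℝ} (hp : p.1 < p.2)
    (h1 : (p.1 : ℝ) ≤ x) (h2 : x < (p.2 : ℝ)) :
    ((bchild p (bpick p x)).1 : ℝ) ≤ x ∧ x < ((bchild p (bpick p x)).2 : ℝ) := by
  have hex := bpick_exists hp h2
  rw [bpick, dif_pos hex]
  have hfind := Nat.find_spec hex
  constructor
  · rcases Nat.eq_zero_or_pos (Nat.find hex) with h0 | h0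
    · rw [h0]
      simp only [bchild]
      push_cast
      simpa using h1
    · obtain ⟨m, hm⟩ := Nat.exists_eq_succ_of_ne_zero h0.ne'
      have := Nat.find_min hex (m := m) (by omega)
      push_neg at this
      rw [hm, Nat.succ_eq_add_one]
      simp only [bchild]
      push_cast
      push_cast at this
      linarith
  · simp only [bchild]
    push_cast
    push_cast at hfind
    linarith

noncomputable def bT (x : ℝ) (v : ℚ × ℚ) : ℕ → ℕ × (ℚ × ℚ)
  | 0 => (0, v)
  | j+1 => ((bpick (bT x v j).2 x), bchild (bT x v j).2 (bpick (bT x v j).2 x))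

lemma bf_splice (α₀ : ℕ → ℕ) (m : ℕ) (x : ℝ)
    (h1 : ((bA α₀ m).1 : ℝ) ≤ x) (h2 : x < ((bA α₀ m).2 : ℝ)) :
    ∃ α : ℕ → ℕ, (∀ i ≤ m, α i = α₀ i) ∧ bf α = x := by
  set v := bA α₀ m with hv
  set α : ℕ → ℕ := fun n => if n ≤ m then α₀ n else (bT x v (n - m)).1 with hα
  have hagree : ∀ i ≤ m, α i = α₀ i := fun i hi => by simp [hα, hi]
  have heq : ∀ j, bA α (m + j) = (bT x v j).2 := by
    intro j
    induction j with
    | zero => simpa [bT] using bA_congr m hagree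
    | succ j ih =>
        have hidx : ¬ (m + j + 1 ≤ m) := by omega
        have h' : m + j + 1 - m = j + 1 := by omega
        have hval : α (m + j + 1) = (bT x v (j+1)).1 := by
          simp only [hα, if_neg hidx, h']
        show bA α (m + j + 1) = _
        simp only [bA, ih, hval]
        rfl
  have hinv : ∀ j, (((bT x v j).2.1 : ℝ) ≤ x ∧ x < ((bT x v j).2.2 : ℝ)) := by
    intro j
    induction j with
    | zero => exact ⟨h1, h2⟩
    | succ j ih =>
        have hlt : (bT x v j).2.1 < (bT x v j).2.2 := by
          rw [← heq j]; exact bA_lt α _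
        exact bpick_spec hlt ih.1 ih.2
  have hmem : ∀ n, x ∈ Set.Ico ((bA α n).1 : ℝ) ((bA α n).2 : ℝ) := by
    intro n
    have hn := hinv n
    rw [← heq n] at hn
    constructor
    · calc ((bA α n).1 : ℝ) ≤ ((bA α (m+n)).1 : ℝ) := by
            exact_mod_cast bA_left_mono α (by omega : n ≤ m + n)
      _ ≤ x := hn.1
    · calc x < ((bA α (m+n)).2 : ℝ) := hn.2
      _ ≤ ((bA α n).2 : ℝ) := by exact_mod_cast bA_right_anti α (by omega : n ≤ m + n)
  exact ⟨α, hagree, bf_eq hmem⟩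

lemma bchild_disjoint {p : ℚ × ℚ} (hp : p.1 < p.2) {k k' : ℕ} (hkk : k < k') (x : ℝ)
    (h1 : ((bchild p k).1 : ℝ) ≤ x ∧ x < ((bchild p k).2 : ℝ))
    (h2 : ((bchild p k').1 : ℝ) ≤ x ∧ x < ((bchild p k').2 : ℝ)) : False := by
  have key : (bchild p k).2 ≤ (bchild p k').1 := by
    simp only [bchild]
    have hd : (0:ℚ) < p.2 - p.1 := by linarith
    have : (p.2 - p.1)/2^k' ≤ (p.2 - p.1)/2^(k+1) := by
      apply div_le_div_of_nonneg_left hd.le (by positivity)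
      exact pow_le_pow_right₀ (by norm_num) (by omega)
    linarith
  have : ((bchild p k).2 : ℝ) ≤ ((bchild p k').1 : ℝ) := by exact_mod_cast key
  linarith [h1.2, h2.1]

lemma bf_inj : Function.Injective bf := by
  intro α β h
  by_contra hne
  have hex : ∃ n, α n ≠ β n := Function.ne_iff.mp hne
  have hn := Nat.find_spec hex
  have hmin : ∀ i < Nat.find hex, α i = β i := fun i hi => not_not.mp (Nat.find_min hex hi)
  have m1 := bf_mem α (Nat.find hex)
  have m2 := bf_mem β (Nat.find hex)
  rw [h] at m1
  rcases Nat.eq_zero_or_pos (Nat.find hex) with h0 | h0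
  · rw [h0] at m1 m2 hn
    simp only [bA] at m1 m2
    have hz : bZ (α 0) ≠ bZ (β 0) := fun hc => hn (bZ.injective hc)
    rcases lt_or_gt_of_ne hz with hlt | hlt
    · have : (bZ (α 0) : ℝ) + 1 ≤ (bZ (β 0) : ℝ) := by exact_mod_cast hlt
      have e1 := m1.2; have e2 := m2.1
      push_cast at e1 e2
      linarith
    · have : (bZ (β 0) : ℝ) + 1 ≤ (bZ (α 0) : ℝ) := by exact_mod_cast hlt
      have e1 := m1.1; have e2 := m2.2
      push_cast at e1 e2
      linarith
  · obtain ⟨m, hm⟩ := Nat.exists_eq_add_of_lt h0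
    rw [zero_add] at hm
    rw [hm] at m1 m2 hn
    have hsame : bA α m = bA β m := bA_congr m (fun i hi => hmin i (by omega))
    simp only [bA] at m1 m2
    rw [hsame] at m1
    have hlt := bA_lt β m
    rcases lt_trichotomy (α (m+1)) (β (m+1)) with hc | hc | hc
    · exact bchild_disjoint hlt hc (bf β) ⟨m1.1, m1.2⟩ ⟨m2.1, m2.2⟩
    · exact hn hc
    · exact bchild_disjoint hlt hc (bf β) ⟨m2.1, m2.2⟩ ⟨m1.1, m1.2⟩

lemma bf_cont : Continuous bf := by
  rw [continuous_iff_continuousAt]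
  intro α
  rw [ContinuousAt, Metric.tendsto_nhds]
  intro ε hε
  obtain ⟨n, hn⟩ := exists_pow_lt_of_lt_one hε (by norm_num : (1:ℝ)/2 < 1)
  have hopen : {β : ℕ → ℕ | ∀ i ≤ n, β i = α i} ∈ nhds α := by
    have heq : {β : ℕ → ℕ | ∀ i ≤ n, β i = α i} = Set.pi (Set.Iic n) (fun i => {α i}) := by
      ext β; simp [Set.pi, Set.mem_Iic]
    rw [heq]
    exact (isOpen_set_pi (Set.finite_Iic n) (fun i _ => isOpen_discrete _)).mem_nhds
      (by simp [Set.pi])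
  filter_upwards [hopen] with β hβ
  have hsame : bA β n = bA α n := bA_congr n hβ
  have m1 := bf_mem α n
  have m2 := bf_mem β n
  rw [hsame] at m2
  have hlen : ((bA α n).2 : ℝ) - ((bA α n).1 : ℝ) ≤ (1/2)^n := by
    have := bA_len α n
    have : (((bA α n).2 - (bA α n).1 : ℚ) : ℝ) ≤ (((1:ℚ)/2)^n : ℚ) := by exact_mod_cast this
    push_cast at this
    linarith
  rw [Real.dist_eq, abs_sub_lt_iff]
  constructor <;> [linarith [m1.1, m1.2, m2.1, m2.2]; linarith [m1.1, m1.2, m2.1, m2.2]]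

lemma bf_surj : Function.Surjective bf := by
  intro x
  set α₀ : ℕ → ℕ := fun _ => bZ.symm ⌊x⌋ with hα₀
  have hA : bA α₀ 0 = ((⌊x⌋:ℚ), (⌊x⌋:ℚ)+1) := by
    simp [bA, hα₀]
  obtain ⟨α, _, hfα⟩ := bf_splice α₀ 0 x
    (by rw [hA]; push_cast; exact Int.floor_le x)
    (by rw [hA]; push_cast; exact Int.lt_floor_add_one x)
  exact ⟨α, hfα⟩

lemma prefix_iff (u : List ℕ) (α : ℕ → ℕ) :
    (List.range u.length).map α = u ↔ ∀ i, i < u.length → α i = u.getD i 0 := by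
  constructor
  · intro h i hi
    have h2 : ((List.range u.length).map α)[i]'(by simpa using hi) = u[i]'hi :=
      List.getElem_of_eq h _
    rw [List.getElem_map, List.getElem_range] at h2
    rw [List.getD_eq_getElem u 0 hi]
    exact h2
  · intro h
    apply List.ext_getElem (by simp)
    intro i h1 h2
    rw [List.getElem_map, List.getElem_range, h i h2, List.getD_eq_getElem u 0 h2]

lemma bf_cyl (u : List ℕ) (hu : u ≠ []) :
    bf '' {α : ℕ → ℕ | (List.range u.length).map α = u} =
      Set.Ico ((bA (fun n => u.getD n 0) (u.length - 1)).1 : ℝ)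
        ((bA (fun n => u.getD n 0) (u.length - 1)).2 : ℝ) := by
  have hL : 1 ≤ u.length := List.length_pos_iff.mpr hu
  ext x
  constructor
  · rintro ⟨α, hα, rfl⟩
    rw [Set.mem_setOf_eq, prefix_iff] at hα
    have : bA α (u.length - 1) = bA (fun n => u.getD n 0) (u.length - 1) :=
      bA_congr _ (fun i hi => hα i (by omega))
    have := bf_mem α (u.length - 1)
    rw [‹bA α (u.length - 1) = _›] at this
    exact this
  · rintro ⟨h1, h2⟩
    obtain ⟨α, hagree, hfα⟩ := bf_splice (fun n => u.getD n 0) (u.length - 1) x h1 h2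
    refine ⟨α, ?_, hfα⟩
    rw [Set.mem_setOf_eq, prefix_iff]
    intro i hi
    exact hagree i (by omega)

/-- For every `N ≥ 1` there is a continuous bijection `π : ℕ^ℕ → ℝ^N` mapping every
cylinder `N_u` (for `u ≠ ∅`) onto a product of `N` half-open intervals with rational
endpoints. -/
theorem exists_continuous_bijection_baire_to_euclidean (N : ℕ) (hN : 1 ≤ N) :
    ∃ π : (ℕ → ℕ) → (Fin N → ℝ), Continuous π ∧ Function.Bijective π ∧
      ∀ u : List ℕ, u ≠ [] →
        ∃ p q : Fin N → ℚ,
          π '' {α : ℕ → ℕ | (List.range u.length).map α = u} =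
            Set.univ.pi (fun i : Fin N => Set.Ico (p i : ℝ) (q i : ℝ)) := by
  haveI : Nonempty (Fin N) := Fin.pos_iff_nonempty.mp hN
  haveI : Denumerable (Fin N → ℕ) := Denumerable.ofEncodableOfInfinite _
  set e : ℕ ≃ (Fin N → ℕ) := (Denumerable.eqv (Fin N → ℕ)).symm with he
  refine ⟨fun α i => bf (fun n => e (α n) i), ?_, ⟨?_, ?_⟩, ?_⟩
  · -- continuity
    apply continuous_pi
    intro i
    exact bf_cont.comp (continuous_pi fun n =>
      (continuous_of_discreteTopology (f := fun k : ℕ => e k i)).comp (continuous_apply n))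
  · -- injectivity
    intro α β h
    funext n
    have hslice : ∀ i, (fun n => e (α n) i) = (fun n => e (β n) i) :=
      fun i => bf_inj (congrFun h i)
    have : e (α n) = e (β n) := funext fun i => congrFun (hslice i) n
    exact e.injective this
  · -- surjectivity
    intro y
    choose g hg using fun i => bf_surj (y i)
    refine ⟨fun n => e.symm (fun i => g i n), ?_⟩
    funext i
    show bf (fun n => e (e.symm (fun i => g i n)) i) = y i
    have : (fun n => e (e.symm (fun i => g i n)) i) = g i := by
      funext n; rw [Equiv.apply_symm_apply]
    rw [this, hg]
  · -- cylinder images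
    intro u hu
    have hL : 1 ≤ u.length := List.length_pos_iff.mpr hu
    set ui : Fin N → List ℕ := fun i => u.map (fun a => e a i) with hui
    have huine : ∀ i, ui i ≠ [] := fun i => by
      simp [hui, hu]
    refine ⟨fun i => (bA (fun n => (ui i).getD n 0) ((ui i).length - 1)).1,
            fun i => (bA (fun n => (ui i).getD n 0) ((ui i).length - 1)).2, ?_⟩
    ext y
    constructor
    · rintro ⟨α, hα, rfl⟩
      rw [Set.mem_setOf_eq] at hα
      intro i _
      show bf (fun n => e (α n) i) ∈ Set.Ico
        ((bA (fun n => (ui i).getD n 0) ((ui i).length - 1)).1 : ℝ)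
        ((bA (fun n => (ui i).getD n 0) ((ui i).length - 1)).2 : ℝ)
      rw [← bf_cyl (ui i) (huine i)]
      refine ⟨fun n => e (α n) i, ?_, rfl⟩
      rw [Set.mem_setOf_eq]
      have hlen : (ui i).length = u.length := by simp [hui]
      rw [hlen]
      calc (List.range u.length).map (fun n => e (α n) i)
          = ((List.range u.length).map α).map (fun a => e a i) := by
            rw [List.map_map]; rfl
      _ = ui i := by rw [hα]
    · intro hy
      have hmem : ∀ i, y i ∈ bf '' {α : ℕ → ℕ | (List.range (ui i).length).map α = ui i} := by
        intro i
        rw [bf_cyl (ui i) (huine i)]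
        exact hy i (Set.mem_univ i)
      choose β hβ hfβ using hmem
      refine ⟨fun n => e.symm (fun i => β i n), ?_, ?_⟩
      · rw [Set.mem_setOf_eq, prefix_iff]
        intro n hn
        have hval : ∀ i, β i n = e (u.getD n 0) i := by
          intro i
          have := (prefix_iff (ui i) (β i)).mp (hβ i) n (by simpa [hui] using hn)
          rw [this, hui]
          rw [List.getD_eq_getElem _ 0 (by simpa using hn), List.getElem_map,
            List.getD_eq_getElem u 0 hn]
        have : (fun i => β i n) = e (u.getD n 0) := funext hval
        rw [this, Equiv.symm_apply_apply]
      · funext i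
        show bf (fun n => e (e.symm (fun i => β i n)) i) = y i
        have : (fun n => e (e.symm (fun i => β i n)) i) = β i := by
          funext n; rw [Equiv.apply_symm_apply]
        rw [this, hfβ]
end

section
/- Let N ≥ 1, let (U_k)_{k∈ℕ} be an enumeration of the open balls in ℝ^N (with respect to the maximum norm) with centers in a fixed countable dense subset of ℝ^N and positive rational radii, and for β ∈ ℕ^ℕ set F(β) = ℝ^N ∖ ⋃_{n∈ℕ} U_{β(n)}. Then the function g(β, x) = dist(x, F(β)) is lower semicontinuous at every point of the set {(β, x) : F(β) is compact and nonempty}: for every a ∈ ℝ and every (β, x) with F(β) compact nonempty and dist(x, F(β)) > a, there is an open neighborhood V of (β, x) in ℕ^ℕ × ℝ^N such that dist(z, F(γ)) > a for all (γ, z) ∈ V with F(γ) ≠ ∅. -/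
/-- Let `(U k)` enumerate the open balls of `ℝ^N` (with the maximum norm) with centers in a
fixed countable dense set and positive rational radii, and for `β ∈ ℕ^ℕ` let
`F β = ℝ^N ∖ ⋃ n, U (β n)`. Then `(β, x) ↦ dist(x, F β)` is lower semicontinuous at every
point where `F β` is compact and nonempty: if `dist(x, F β) > a` then on a neighborhood `V`
of `(β, x)` we have `dist(z, F γ) > a` for all `(γ, z) ∈ V` with `F γ ≠ ∅`. -/
theorem infDist_compl_union_balls_lowerSemicontinuous (N : ℕ) (hN : 1 ≤ N)
    (D : ℕ → (Fin N → ℝ)) (hD : DenseRange D)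
    (U : ℕ → Set (Fin N → ℝ))
    (hU : ∀ k, ∃ (i : ℕ) (r : ℚ), 0 < r ∧ U k = Metric.ball (D i) (r : ℝ))
    (hU' : ∀ (i : ℕ) (r : ℚ), 0 < r → ∃ k, U k = Metric.ball (D i) (r : ℝ))
    (a : ℝ) (β : ℕ → ℕ) (x : Fin N → ℝ)
    (hcomp : IsCompact ((⋃ n, U (β n))ᶜ))
    (hne : ((⋃ n, U (β n))ᶜ : Set (Fin N → ℝ)).Nonempty)
    (ha : a < Metric.infDist x ((⋃ n, U (β n))ᶜ)) :
    ∃ V : Set ((ℕ → ℕ) × (Fin N → ℝ)), IsOpen V ∧ (β, x) ∈ V ∧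
      ∀ (γ : ℕ → ℕ) (z : Fin N → ℝ), (γ, z) ∈ V →
        ((⋃ n, U (γ n))ᶜ : Set (Fin N → ℝ)).Nonempty →
        a < Metric.infDist z ((⋃ n, U (γ n))ᶜ) := by
  classical
  rcases lt_or_ge a 0 with haneg | ha0
  · exact ⟨Set.univ, isOpen_univ, trivial, fun γ z _ _ =>
      lt_of_lt_of_le haneg Metric.infDist_nonneg⟩
  set d := Metric.infDist x ((⋃ n, U (β n))ᶜ) with hd
  set a' := (a + d) / 2 with ha'
  have haa' : a < a' := by rw [ha']; linarith
  have ha'd : a' < d := by rw [ha']; linarith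
  have hUopen : ∀ k, IsOpen (U k) := by
    intro k
    obtain ⟨i, r, _, hk⟩ := hU k
    rw [hk]; exact Metric.isOpen_ball
  have hball : Metric.closedBall x a' ⊆ ⋃ n, U (β n) := by
    intro y hy
    by_contra hyn
    have hle := Metric.infDist_le_dist_of_mem (s := (⋃ n, U (β n))ᶜ) (x := x) hyn
    rw [Metric.mem_closedBall] at hy
    rw [dist_comm] at hy
    linarith
  obtain ⟨t, ht⟩ := (isCompact_closedBall x a').elim_finite_subcover
    (fun n => U (β n)) (fun n => hUopen (β n)) hball
  refine ⟨{γ | ∀ n ∈ t, γ n = β n} ×ˢ Metric.ball x (a' - a), ?_, ?_, ?_⟩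
  · apply IsOpen.prod
    · have : {γ : ℕ → ℕ | ∀ n ∈ t, γ n = β n}
          = Set.pi (t : Set ℕ) (fun n => {β n}) := by
        ext γ; simp [Set.mem_pi]
      rw [this]
      exact isOpen_set_pi t.finite_toSet (fun n _ => isOpen_discrete _)
    · exact Metric.isOpen_ball
  · exact ⟨fun n _ => rfl, by simp [Metric.mem_ball]; linarith⟩
  · rintro γ z ⟨hγ, hz⟩ hγne
    replace hγ : ∀ n ∈ t, γ n = β n := hγ
    replace hz : z ∈ Metric.ball x (a' - a) := hz
    by_contra hcon
    push_neg at hcon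
    obtain ⟨y, hy, hyd⟩ := (isClosed_compl_iff.mpr
      (isOpen_iUnion (fun n => hUopen (γ n)))).exists_infDist_eq_dist hγne z
    have hdzy : dist z y ≤ a := by rw [← hyd]; exact hcon
    have hyx : dist y x ≤ a' := by
      have h1 := dist_triangle y z x
      rw [Metric.mem_ball] at hz
      rw [dist_comm y z] at h1
      linarith
    have hyU : y ∈ ⋃ n ∈ t, U (β n) := ht (Metric.mem_closedBall.mpr hyx)
    simp only [Set.mem_iUnion] at hyU
    obtain ⟨n, hnt, hyn⟩ := hyU
    exact hy (Set.mem_iUnion.mpr ⟨n, by rwa [hγ n hnt]⟩)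
end
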